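/- arXiv:1211.3186 — 3 statements merged into one kernel-verified Lean document; each statement's English description precedes it below -/
import Mathlib

section
/- Equivalence of the two scalar products (Lemma 3.1, algebraic form). Let K = ℚ(q,t) be the field of rational functions in two indeterminates q, t over ℚ, and let R be the polynomial ring over K in two countable families of indeterminates ū_1, ū_2, … and v̄_1, v̄_2, …. For a partition λ write ū_λ = ∏_i ū_{λ_i} and v̄_λ = ∏_i v̄_{λ_i} (products over the nonzero parts). Let B : R × R → K be the K-bilinear form determined on the monomial basis {ū_λ v̄_μ : λ, μ partitions} by B(ū_λ v̄_μ, ū_ν v̄_ω) = δ_{λν} δ_{μω} q^{|λ|} z_λ z_μ(q,t). Define, for each r ≥ 1, u_r = ((1−q^r)/(1−q^r t^r)) ū_r + (q^r (1−t^r)/(1−q^r t^r)) v̄_r and v_r = v̄_r − ū_r, and set u_λ = ∏_i u_{λ_i}, v_μ = ∏_i v_{μ_i}. Then for all partitions λ, μ, ν, ω one has B(u_λ v_μ, u_ν v_ω) = δ_{λν} δ_{μω} q^{|λ|} z_λ(q,qt) z_μ(qt,t). -/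
open scoped Classical

noncomputable section

set_option synthInstance.maxHeartbeats 1000000
set_option maxHeartbeats 4000000

namespace DoubleMacdonald

/-- A partition, encoded as a weakly decreasing function `ℕ → ℕ` (0-indexed: `f 0 = λ₁`)
with finitely many nonzero values. -/
def IsPartition (f : ℕ → ℕ) : Prop :=
  (∀ ⦃i j : ℕ⦄, i ≤ j → f j ≤ f i) ∧ ∃ N, ∀ i, N ≤ i → f i = 0

/-- The size `|λ| = Σᵢ λᵢ` of a partition. -/
def psize (f : ℕ → ℕ) : ℕ := ∑ᶠ i, f i

/-- The multiplicity `n_k(λ)`: the number of parts of `λ` equal to `k` (for `k ≥ 1`). -/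
def mult (f : ℕ → ℕ) (k : ℕ) : ℕ := Nat.card {i : ℕ | f i = k}

/-- `z_λ = ∏_{k≥1} k^{n_k(λ)} n_k(λ)!`. -/
def zstat (f : ℕ → ℕ) : ℕ :=
  ∏ᶠ k : ℕ, (k + 1) ^ mult f (k + 1) * (mult f (k + 1)).factorial

/-- The field `K = ℚ(q,t)` of rational functions in two indeterminates over `ℚ`. -/
abbrev K : Type := FractionRing (MvPolynomial (Fin 2) ℚ)

/-- The indeterminate `q` of `ℚ(q,t)`. -/
def q : K := algebraMap (MvPolynomial (Fin 2) ℚ) K (MvPolynomial.X 0)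

/-- The indeterminate `t` of `ℚ(q,t)`. -/
def t : K := algebraMap (MvPolynomial (Fin 2) ℚ) K (MvPolynomial.X 1)

/-- The polynomial ring `R = K[ū₁, ū₂, …; v̄₁, v̄₂, …]` in two countable families of
indeterminates (indexed by `ℕ ⊕ ℕ`; only the indices `r ≥ 1` are used). -/
abbrev R : Type := MvPolynomial (ℕ ⊕ ℕ) K

/-- The generator `ū_r`. -/
def ubar (r : ℕ) : R := MvPolynomial.X (Sum.inl r)

/-- The generator `v̄_r`. -/
def vbar (r : ℕ) : R := MvPolynomial.X (Sum.inr r)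

/-- `u_r = ((1−q^r)/(1−q^r t^r)) ū_r + (q^r (1−t^r)/(1−q^r t^r)) v̄_r`. -/
def u (r : ℕ) : R :=
  MvPolynomial.C ((1 - q ^ r) / (1 - q ^ r * t ^ r)) * ubar r +
    MvPolynomial.C (q ^ r * (1 - t ^ r) / (1 - q ^ r * t ^ r)) * vbar r

/-- `v_r = v̄_r − ū_r`. -/
def v (r : ℕ) : R := vbar r - ubar r

/-- For a family `w : ℕ → R` and a partition `λ`, the product `w_λ = ∏ᵢ w_{λᵢ}`
over the nonzero parts of `λ`. -/
def prodOf (w : ℕ → R) (f : ℕ → ℕ) : R := ∏ᶠ i : ℕ, if f i = 0 then 1 else w (f i)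

/-- `z_λ(a,b) = z_λ ∏ᵢ (1 − a^{λᵢ})/(1 − b^{λᵢ})`, the product over the nonzero parts. -/
def zqt (a b : K) (f : ℕ → ℕ) : K :=
  (zstat f : K) * ∏ᶠ i : ℕ, if f i = 0 then 1 else (1 - a ^ f i) / (1 - b ^ f i)


/-! ### Auxiliary development -/

open MvPolynomial

def cfact {α : Type*} [DecidableEq α] (L : Multiset α) : ℕ :=
  ∏ x ∈ L.toFinset, (L.count x).factorial

lemma cfact_zero {α : Type*} [DecidableEq α] : cfact (0 : Multiset α) = 1 := by
  simp [cfact]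

lemma cfact_cons {α : Type*} [DecidableEq α] (a : α) (L : Multiset α) :
    cfact (a ::ₘ L) = (L.count a + 1) * cfact L := by
  unfold cfact
  rw [Multiset.toFinset_cons]
  by_cases ha : a ∈ L.toFinset
  · rw [Finset.insert_eq_self.mpr ha]
    rw [← Finset.mul_prod_erase _ _ ha, ← Finset.mul_prod_erase _ _ ha]
    have h1 : ∏ x ∈ L.toFinset.erase a, ((a ::ₘ L).count x).factorial
        = ∏ x ∈ L.toFinset.erase a, (L.count x).factorial := by
      refine Finset.prod_congr rfl fun x hx => ?_
      rw [Multiset.count_cons_of_ne (Finset.ne_of_mem_erase hx)]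
    rw [h1, Multiset.count_cons_self, Nat.factorial_succ]
    ring
  · have hL : L.count a = 0 :=
      Multiset.count_eq_zero.mpr fun h => ha (Multiset.mem_toFinset.mpr h)
    rw [Finset.prod_insert ha, Multiset.count_cons_self, hL]
    have h1 : ∏ x ∈ L.toFinset, ((a ::ₘ L).count x).factorial
        = ∏ x ∈ L.toFinset, (L.count x).factorial := by
      refine Finset.prod_congr rfl fun x hx => ?_
      rw [Multiset.count_cons_of_ne (fun hxa => ha (by rw [← hxa]; exact hx))]
    rw [h1]
    norm_num

lemma finset_range_of_dc (s : Finset ℕ) (h : ∀ i j : ℕ, i ≤ j → j ∈ s → i ∈ s) :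
    s = Finset.range s.card := by
  ext i
  simp only [Finset.mem_range]
  constructor
  · intro hi
    have hsub : Finset.range (i + 1) ⊆ s := fun j hj =>
      h j i (Nat.lt_succ_iff.mp (Finset.mem_range.mp hj)) hi
    have := Finset.card_le_card hsub
    simp only [Finset.card_range] at this
    omega
  · intro hi
    by_contra hns
    have hsub : s ⊆ Finset.range i := by
      intro j hj
      rw [Finset.mem_range]
      by_contra hji
      exact hns (h i j (by omega) hj)
    have := Finset.card_le_card hsub
    simp only [Finset.card_range] at this
    omega

def pcut (f : ℕ → ℕ) : ℕ := sInf {N | ∀ i, N ≤ i → f i = 0}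

lemma pcut_spec {f : ℕ → ℕ} (hf : IsPartition f) : ∀ i, pcut f ≤ i → f i = 0 :=
  Nat.sInf_mem (hf.2 : {N | ∀ i, N ≤ i → f i = 0}.Nonempty)

def parts (f : ℕ → ℕ) : Multiset ℕ :=
  Multiset.map f ((Finset.range (pcut f)).filter (fun i => f i ≠ 0)).val

lemma parts_eq (f : ℕ → ℕ) (hf : IsPartition f) (N : ℕ) (hN : ∀ i, N ≤ i → f i = 0) :
    parts f = Multiset.map f ((Finset.range N).filter (fun i => f i ≠ 0)).val := by
  have key : (Finset.range (pcut f)).filter (fun i => f i ≠ 0)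
      = (Finset.range N).filter (fun i => f i ≠ 0) := by
    ext i
    simp only [Finset.mem_filter, Finset.mem_range]
    constructor
    · rintro ⟨-, hfi⟩
      refine ⟨?_, hfi⟩
      by_contra hx
      exact hfi (hN i (by omega))
    · rintro ⟨-, hfi⟩
      refine ⟨?_, hfi⟩
      by_contra hx
      exact hfi (pcut_spec hf i (by omega))
  unfold parts
  rw [key]

lemma parts_ne_zero {f : ℕ → ℕ} {x : ℕ} (hx : x ∈ parts f) : x ≠ 0 := by
  unfold parts at hx
  obtain ⟨i, hi, rfl⟩ := Multiset.mem_map.mp hx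
  rw [Finset.filter_val, Multiset.mem_filter] at hi
  exact hi.2

lemma finprod_ite_eq_parts {M : Type*} [CommMonoid M] (w : ℕ → M) (f : ℕ → ℕ)
    (hf : IsPartition f) :
    (∏ᶠ i : ℕ, if f i = 0 then 1 else w (f i)) = ((parts f).map w).prod := by
  obtain ⟨N, hN⟩ := hf.2
  have hsupp : Function.mulSupport (fun i => if f i = 0 then 1 else w (f i))
      ⊆ ↑(Finset.range N) := by
    intro i hi
    simp only [Function.mem_mulSupport] at hi
    simp only [Finset.coe_range, Set.mem_Iio]
    by_contra hx
    exact hi (by rw [hN i (by omega), if_pos rfl])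
  rw [finprod_eq_prod_of_mulSupport_subset _ hsupp, parts_eq f hf N hN, Multiset.map_map,
    ← Finset.prod_eq_multiset_prod, Finset.prod_filter]
  exact Finset.prod_congr rfl fun i _ => by by_cases h : f i = 0 <;> simp [h]

lemma psize_eq (f : ℕ → ℕ) (hf : IsPartition f) : psize f = (parts f).sum := by
  obtain ⟨N, hN⟩ := hf.2
  have hsupp : Function.support f ⊆ ↑(Finset.range N) := by
    intro i hi
    simp only [Function.mem_support] at hi
    simp only [Finset.coe_range, Set.mem_Iio]
    by_contra hx
    exact hi (hN i (by omega))
  unfold psize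
  rw [finsum_eq_sum_of_support_subset _ hsupp, parts_eq f hf N hN,
    ← Finset.sum_eq_multiset_sum, Finset.sum_filter]
  exact Finset.sum_congr rfl fun i _ => by by_cases h : f i = 0 <;> simp [h]

lemma count_parts (f : ℕ → ℕ) (hf : IsPartition f) (r : ℕ) (hr : r ≠ 0) :
    (parts f).count r = mult f r := by
  obtain ⟨N, hN⟩ := hf.2
  rw [parts_eq f hf N hN, Multiset.count_map, Finset.filter_val, Multiset.filter_filter]
  have h1 : Multiset.filter (fun a => r = f a ∧ f a ≠ 0) (Finset.range N).val
      = ((Finset.range N).filter (fun i => f i = r)).val := by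
    rw [Finset.filter_val]
    refine Multiset.filter_congr fun x _ => ?_
    constructor
    · rintro ⟨h, -⟩; exact h.symm
    · rintro h; exact ⟨h.symm, by rw [h]; exact hr⟩
  rw [h1]
  have hset : {i : ℕ | f i = r} = ↑((Finset.range N).filter (fun i => f i = r)) := by
    ext i
    simp only [Set.mem_setOf_eq, Finset.coe_filter, Finset.mem_range, Set.mem_setOf_eq]
    refine ⟨fun h => ⟨?_, h⟩, fun h => h.2⟩
    by_contra hx
    exact hr (h ▸ (hN i (by omega)))
  unfold mult
  rw [hset, Nat.card_coe_set_eq, Set.ncard_coe_finset]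
  rfl

lemma zstat_eq (f : ℕ → ℕ) (hf : IsPartition f) :
    zstat f = (parts f).prod * cfact (parts f) := by
  set L := parts f with hLdef
  have hcount : ∀ r : ℕ, r ≠ 0 → L.count r = mult f r := fun r hr => count_parts f hf r hr
  have h0 : (0 : ℕ) ∉ L := fun h => parts_ne_zero h rfl
  unfold zstat
  have hsupp : Function.mulSupport
      (fun k : ℕ => (k + 1) ^ mult f (k + 1) * (mult f (k + 1)).factorial)
      ⊆ ↑(L.toFinset.image (· - 1)) := by
    intro k hk
    simp only [Function.mem_mulSupport] at hk
    have hmlt : mult f (k + 1) ≠ 0 := by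
      intro h
      apply hk
      rw [h]
      simp
    have hmem : k + 1 ∈ L := by
      rw [← Multiset.count_pos, hcount (k + 1) (by omega)]
      omega
    exact Finset.mem_coe.mpr (Finset.mem_image.mpr ⟨k + 1, Multiset.mem_toFinset.mpr hmem, rfl⟩)
  rw [finprod_eq_prod_of_mulSupport_subset _ hsupp]
  have hre : ∏ k ∈ L.toFinset.image (· - 1), ((k + 1) ^ mult f (k + 1) * (mult f (k + 1)).factorial)
      = ∏ r ∈ L.toFinset, (r ^ L.count r * (L.count r).factorial) := by
    rw [Finset.prod_image]
    · refine Finset.prod_congr rfl fun r hr => ?_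
      have hr0 : r ≠ 0 := fun h => h0 (h ▸ Multiset.mem_toFinset.mp hr)
      have h1 : r - 1 + 1 = r := by omega
      rw [h1, hcount r hr0]
    · intro x hx y hy hxy
      have hx0 : x ≠ 0 := fun h => h0 (h ▸ Multiset.mem_toFinset.mp hx)
      have hy0 : y ≠ 0 := fun h => h0 (h ▸ Multiset.mem_toFinset.mp hy)
      simp only at hxy
      omega
  rw [hre, Finset.prod_mul_distrib, ← Finset.prod_multiset_count]
  rfl


def fromM (L : Multiset ℕ) : ℕ → ℕ := fun i => (L.sort (· ≥ ·)).getD i 0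

lemma fromM_isPartition (L : Multiset ℕ) : IsPartition (fromM L) := by
  constructor
  · intro i j hij
    set l := L.sort (· ≥ ·) with hl
    by_cases hj : j < l.length
    · have hi : i < l.length := lt_of_le_of_lt hij hj
      unfold fromM
      rw [← hl, List.getD_eq_getElem l 0 hj, List.getD_eq_getElem l 0 hi]
      rcases eq_or_lt_of_le hij with rfl | hlt
      · exact le_refl _
      · exact (List.pairwise_iff_getElem.mp (Multiset.pairwise_sort L (· ≥ ·))) i j hi hj hlt
    · unfold fromM
      rw [← hl, List.getD_eq_default l 0 (le_of_not_gt hj)]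
      exact Nat.zero_le _
  · exact ⟨(L.sort (· ≥ ·)).length, fun i hi => List.getD_eq_default _ _ hi⟩

lemma parts_fromM (L : Multiset ℕ) (hL : ∀ x ∈ L, x ≠ 0) : parts (fromM L) = L := by
  set l := L.sort (· ≥ ·) with hl
  have hlen : ∀ i, l.length ≤ i → fromM L i = 0 := fun i hi => List.getD_eq_default _ _ hi
  rw [parts_eq _ (fromM_isPartition L) l.length hlen]
  have hmem : ∀ i < l.length, fromM L i ≠ 0 := by
    intro i hi
    have h1 : fromM L i ∈ l := by
      unfold fromM
      rw [← hl, List.getD_eq_getElem l 0 hi]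
      exact List.getElem_mem _
    have h2 : fromM L i ∈ L := by
      rw [hl] at h1
      exact (Multiset.mem_sort (· ≥ ·)).mp h1
    exact hL _ h2
  have hfilter : (Finset.range l.length).filter (fun i => fromM L i ≠ 0)
      = Finset.range l.length :=
    Finset.filter_true_of_mem fun i hi => hmem i (Finset.mem_range.mp hi)
  rw [hfilter]
  have hcoe : Multiset.map (fromM L) (Finset.range l.length).val
      = ↑(List.map (fromM L) (List.range l.length)) := by
    rw [Finset.range_val, Multiset.range, Multiset.map_coe]
  rw [hcoe]
  have hmap : List.map (fromM L) (List.range l.length) = l := by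
    apply List.ext_getElem
    · simp
    · intro i h1 h2
      simp only [List.getElem_map, List.getElem_range]
      exact List.getD_eq_getElem l 0 h2
  rw [hmap, hl]
  exact Multiset.sort_eq L (· ≥ ·)

lemma eq_fromM_parts (f : ℕ → ℕ) (hf : IsPartition f) : f = fromM (parts f) := by
  set s := (Finset.range (pcut f)).filter (fun i => f i ≠ 0) with hs
  have hdc : ∀ i j : ℕ, i ≤ j → j ∈ s → i ∈ s := by
    intro i j hij hj
    simp only [hs, Finset.mem_filter, Finset.mem_range] at hj ⊢
    exact ⟨lt_of_le_of_lt hij hj.1, fun h0 => hj.2 (Nat.le_zero.mp (h0 ▸ hf.1 hij))⟩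
  set n := s.card with hn
  have hrange : s = Finset.range n := finset_range_of_dc s hdc
  have hzero : ∀ i, n ≤ i → f i = 0 := by
    intro i hi
    by_contra h0
    by_cases hp : i < pcut f
    · have hin : i ∈ s := Finset.mem_filter.mpr ⟨Finset.mem_range.mpr hp, h0⟩
      rw [hrange, Finset.mem_range] at hin
      omega
    · exact h0 (pcut_spec hf i (by omega))
  have hparts : parts f = ↑(List.map f (List.range n)) := by
    unfold parts
    rw [← hs, hrange, Finset.range_val, Multiset.range, Multiset.map_coe]
  have hsorted : List.Pairwise (· ≥ ·) (List.map f (List.range n)) := by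
    apply List.pairwise_iff_getElem.mpr
    intro i j hi hj hij
    simp only [List.getElem_map, List.getElem_range]
    exact hf.1 (le_of_lt hij)
  have hsort : (parts f).sort (· ≥ ·) = List.map f (List.range n) := by
    haveI : IsAntisymm ℕ (· ≥ ·) := ⟨fun a b h1 h2 => le_antisymm h2 h1⟩
    refine (fun h1 h2 h3 => List.Perm.eq_of_pairwise' (r := (· ≥ ·)) h2 h3 h1) ?_ ?_ ?_
    · exact Multiset.coe_eq_coe.mp ((Multiset.sort_eq (parts f) (· ≥ ·)).trans hparts)
    · exact Multiset.pairwise_sort _ _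
    · exact hsorted
  funext i
  unfold fromM
  rw [hsort]
  by_cases hi : i < n
  · rw [List.getD_eq_getElem _ 0 (by simpa using hi)]
    simp
  · rw [List.getD_eq_default _ 0 (by simpa using (by omega : n ≤ i))]
    exact hzero i (by omega)


section GenericGam

variable {F : Type*} [CommRing F] {σ : Type*} (wt : σ → F)

def W (m : σ →₀ ℕ) : F := m.prod fun i e => (e.factorial : F) * wt i ^ e

def Gam (P Q : MvPolynomial σ F) : F :=
  ∑ m ∈ P.support, MvPolynomial.coeff m P * MvPolynomial.coeff m Q * W wt m

variable {wt}

lemma Gam_eq_sum {P : MvPolynomial σ F} {s : Finset (σ →₀ ℕ)} (hs : P.support ⊆ s)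
    (Q : MvPolynomial σ F) :
    Gam wt P Q = ∑ m ∈ s, (MvPolynomial.coeff m P * MvPolynomial.coeff m Q * W wt m : F) := by
  unfold Gam
  refine Finset.sum_subset hs fun m _ hnm => ?_
  rw [MvPolynomial.notMem_support_iff.mp hnm]
  ring

lemma Gam_add_left (P P' Q : MvPolynomial σ F) :
    Gam wt (P + P') Q = Gam wt P Q + Gam wt P' Q := by
  set s := P.support ∪ P'.support ∪ (P + P').support with hs
  have hsub1 : P.support ⊆ s := by
    rw [hs]
    exact Finset.subset_union_left.trans Finset.subset_union_left
  have hsub2 : P'.support ⊆ s := by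
    rw [hs]
    exact Finset.subset_union_right.trans Finset.subset_union_left
  have hsub3 : (P + P').support ⊆ s := by
    rw [hs]
    exact Finset.subset_union_right
  rw [Gam_eq_sum hsub3 Q, Gam_eq_sum hsub1 Q, Gam_eq_sum hsub2 Q]
  rw [← Finset.sum_add_distrib]
  exact Finset.sum_congr rfl fun m _ => by rw [MvPolynomial.coeff_add]; ring

lemma Gam_add_right (P Q Q' : MvPolynomial σ F) :
    Gam wt P (Q + Q') = Gam wt P Q + Gam wt P Q' := by
  unfold Gam
  rw [← Finset.sum_add_distrib]
  exact Finset.sum_congr rfl fun m _ => by rw [MvPolynomial.coeff_add]; ring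

lemma Gam_zero_left (Q : MvPolynomial σ F) : Gam wt 0 Q = 0 := by
  simp [Gam]

lemma Gam_zero_right (P : MvPolynomial σ F) : Gam wt P 0 = 0 := by
  simp [Gam]

lemma Gam_Cmul_left (c : F) (P Q : MvPolynomial σ F) :
    Gam wt (MvPolynomial.C c * P) Q = c * Gam wt P Q := by
  rw [MvPolynomial.C_mul']
  rw [Gam_eq_sum (s := P.support) MvPolynomial.support_smul Q]
  unfold Gam
  rw [Finset.mul_sum]
  exact Finset.sum_congr rfl fun m _ => by
    rw [MvPolynomial.coeff_smul, smul_eq_mul]; ring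

lemma Gam_Cmul_right (c : F) (P Q : MvPolynomial σ F) :
    Gam wt P (MvPolynomial.C c * Q) = c * Gam wt P Q := by
  unfold Gam
  rw [Finset.mul_sum]
  exact Finset.sum_congr rfl fun m _ => by rw [MvPolynomial.coeff_C_mul]; ring

lemma Gam_smul_left (c : F) (P Q : MvPolynomial σ F) :
    Gam wt (c • P) Q = c * Gam wt P Q := by
  rw [← MvPolynomial.C_mul', Gam_Cmul_left]

lemma Gam_smul_right (c : F) (P Q : MvPolynomial σ F) :
    Gam wt P (c • Q) = c * Gam wt P Q := by
  rw [← MvPolynomial.C_mul', Gam_Cmul_right]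

lemma Gam_sub_left (P P' Q : MvPolynomial σ F) :
    Gam wt (P - P') Q = Gam wt P Q - Gam wt P' Q := by
  have h : P - P' = P + MvPolynomial.C (-1 : F) * P' := by
    rw [map_neg, map_one]
    ring
  rw [h, Gam_add_left, Gam_Cmul_left]
  ring

lemma Gam_sub_right (P Q Q' : MvPolynomial σ F) :
    Gam wt P (Q - Q') = Gam wt P Q - Gam wt P Q' := by
  have h : Q - Q' = Q + MvPolynomial.C (-1 : F) * Q' := by
    rw [map_neg, map_one]
    ring
  rw [h, Gam_add_right, Gam_Cmul_right]
  ring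

lemma Gam_monomial (E E' : σ →₀ ℕ) (a c : F) :
    Gam wt (MvPolynomial.monomial E a) (MvPolynomial.monomial E' c) =
      if E = E' then a * c * W wt E else 0 := by
  have hs : (MvPolynomial.monomial E a).support ⊆ {E} := by
    rw [MvPolynomial.support_monomial]
    split <;> simp
  rw [Gam_eq_sum hs, Finset.sum_singleton, MvPolynomial.coeff_monomial,
    MvPolynomial.coeff_monomial, if_pos rfl]
  by_cases h : E = E'
  · rw [if_pos h, if_pos (h.symm)]
  · rw [if_neg h, if_neg (fun hh => h hh.symm)]
    ring

lemma W_zero : W wt 0 = 1 := Finsupp.prod_zero_index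

lemma W_add_single (s : σ →₀ ℕ) (i : σ) :
    W wt (s + Finsupp.single i 1) = ((s i : F) + 1) * wt i * W wt s := by
  set T := insert i s.support with hT
  have h1 : (s + Finsupp.single i 1).support ⊆ T := by
    refine Finsupp.support_add.trans ?_
    intro x hx
    rcases Finset.mem_union.mp hx with hx | hx
    · exact Finset.mem_insert_of_mem hx
    · rw [Finsupp.support_single_ne_zero i one_ne_zero] at hx
      simp only [Finset.mem_singleton] at hx
      rw [hx]
      exact Finset.mem_insert_self i _
  have h2 : s.support ⊆ T := Finset.subset_insert _ _
  have e1 : W wt (s + Finsupp.single i 1) = ∏ x ∈ T,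
      (((((s + Finsupp.single i 1 : σ →₀ ℕ) x)).factorial : F) * wt x ^ (((s + Finsupp.single i 1 : σ →₀ ℕ) x))) :=
    Finsupp.prod_of_support_subset _ h1 _ fun x _ => by simp
  have e2 : W wt s = ∏ x ∈ T, (((s x).factorial : F) * wt x ^ (s x)) :=
    Finsupp.prod_of_support_subset _ h2 _ fun x _ => by simp
  rw [e1, e2, ← Finset.mul_prod_erase T _ (Finset.mem_insert_self i _),
    ← Finset.mul_prod_erase T _ (Finset.mem_insert_self i _)]
  have happ : (s + Finsupp.single i 1 : σ →₀ ℕ) i = s i + 1 := by simp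
  have hothers : ∏ x ∈ T.erase i,
      (((((s + Finsupp.single i 1 : σ →₀ ℕ) x)).factorial : F) * wt x ^ (((s + Finsupp.single i 1 : σ →₀ ℕ) x)))
      = ∏ x ∈ T.erase i, (((s x).factorial : F) * wt x ^ (s x)) := by
    refine Finset.prod_congr rfl fun x hx => ?_
    have hxi : x ≠ i := Finset.ne_of_mem_erase hx
    rw [show ((s + Finsupp.single i 1 : σ →₀ ℕ) x) = s x from by
      simp [Finsupp.single_apply, Ne.symm hxi]]
  rw [happ, hothers, Nat.factorial_succ, pow_succ]
  push_cast
  ring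

lemma Gam_X_mul (i : σ) (P Q : MvPolynomial σ F) :
    Gam wt (MvPolynomial.X i * P) Q = wt i * Gam wt P (MvPolynomial.pderiv i Q) := by
  have key : ∀ (E : σ →₀ ℕ) (a : F) (m : σ →₀ ℕ) (c : F),
      Gam wt (MvPolynomial.X i * MvPolynomial.monomial E a) (MvPolynomial.monomial m c)
        = wt i * Gam wt (MvPolynomial.monomial E a)
            (MvPolynomial.pderiv i (MvPolynomial.monomial m c)) := by
    intro E a m c
    rw [show (MvPolynomial.X i : MvPolynomial σ F)
        = MvPolynomial.monomial (Finsupp.single i 1) 1 from rfl,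
      MvPolynomial.monomial_mul, one_mul, MvPolynomial.pderiv_monomial,
      Gam_monomial, Gam_monomial]
    by_cases hmi : m i = 0
    · have hne : ¬(Finsupp.single i 1 + E = m) := by
        intro h
        have := congrArg (fun z => z i) h
        simp at this
        omega
      rw [if_neg hne, hmi]
      push_cast
      split <;> ring
    · have hiff : Finsupp.single i 1 + E = m ↔ E = m - Finsupp.single i 1 := by
        constructor
        · rintro rfl
          ext x
          simp only [Finsupp.coe_tsub, Pi.sub_apply, Finsupp.add_apply, Finsupp.single_apply]
          split <;> omega
        · rintro rfl
          ext x
          by_cases hx : i = x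
          · subst hx
            simp only [Finsupp.add_apply, Finsupp.coe_tsub, Pi.sub_apply, Finsupp.single_eq_same]
            omega
          · simp only [Finsupp.add_apply, Finsupp.coe_tsub, Pi.sub_apply,
              Finsupp.single_eq_of_ne' hx]
            omega
      by_cases hE : Finsupp.single i 1 + E = m
      · rw [if_pos hE, if_pos (hiff.mp hE)]
        have hW : W wt (Finsupp.single i 1 + E) = ((E i : F) + 1) * wt i * W wt E := by
          rw [add_comm]
          exact W_add_single E i
        rw [hW]
        have hEim : (E i : F) + 1 = (m i : F) := by
          have := congrArg (fun z => z i) hE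
          simp only [Finsupp.add_apply, Finsupp.single_apply, if_pos rfl] at this
          push_cast [← this]
          ring
        rw [hEim]
        ring
      · rw [if_neg hE, if_neg (fun h => hE (hiff.mpr h))]
        ring
  induction P using MvPolynomial.induction_on' with
  | monomial E a =>
    induction Q using MvPolynomial.induction_on' with
    | monomial m c => exact key E a m c
    | add Q1 Q2 ih1 ih2 =>
      rw [map_add, Gam_add_right, Gam_add_right, ih1, ih2]
      ring
  | add P1 P2 ih1 ih2 =>
    rw [mul_add, Gam_add_left, Gam_add_left, ih1, ih2]
    ring

lemma Gam_one_left (Q : MvPolynomial σ F) : Gam wt 1 Q = MvPolynomial.coeff 0 Q := by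
  rw [show (1 : MvPolynomial σ F) = MvPolynomial.monomial 0 1 from by
    rw [MvPolynomial.monomial_zero', map_one]]
  rw [Gam_eq_sum (s := {0}) (by rw [MvPolynomial.support_monomial]; split <;> simp) Q,
    Finset.sum_singleton, MvPolynomial.coeff_monomial, if_pos rfl, W_zero]
  ring


end GenericGam

lemma parts_inj {f g : ℕ → ℕ} (hf : IsPartition f) (hg : IsPartition g)
    (h : parts f = parts g) : f = g := by
  rw [eq_fromM_parts f hf, eq_fromM_parts g hg, h]

lemma prodOf_eq (w : ℕ → R) (f : ℕ → ℕ) (hf : IsPartition f) :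
    prodOf w f = ((parts f).map w).prod := finprod_ite_eq_parts w f hf

lemma zqt_eq (a b : K) (f : ℕ → ℕ) (hf : IsPartition f) :
    zqt a b f =
      ((parts f).map (fun r : ℕ => (r : K) * ((1 - a ^ r) / (1 - b ^ r)))).prod *
        (cfact (parts f) : K) := by
  unfold zqt
  rw [finprod_ite_eq_parts (fun r : ℕ => (1 - a ^ r) / (1 - b ^ r)) f hf, zstat_eq f hf]
  push_cast
  rw [Multiset.prod_map_mul]
  have hcast : Multiset.map (fun r : ℕ => (r : K)) (parts f) = Multiset.map Nat.cast (parts f) :=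
    rfl
  rw [hcast]
  ring

/-! ### instantiation -/

def wt : ℕ ⊕ ℕ → K :=
  Sum.elim (fun r => (r : K) * q ^ r) (fun r => (r : K) * (1 - q ^ r) / (1 - t ^ r))

/-! ### field facts -/

lemma one_sub_t_pow_ne (r : ℕ) (hr : r ≠ 0) : (1 : K) - t ^ r ≠ 0 := by
  unfold t
  rw [← map_pow, ← map_one (algebraMap (MvPolynomial (Fin 2) ℚ) K), ← map_sub]
  intro h
  have hinj := IsFractionRing.injective (MvPolynomial (Fin 2) ℚ) K
  have h0 : (1 - MvPolynomial.X 1 ^ r : MvPolynomial (Fin 2) ℚ) = 0 := by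
    apply hinj
    rw [map_zero]
    exact h
  have h1 := congrArg MvPolynomial.constantCoeff h0
  simp only [map_sub, map_one, map_pow, MvPolynomial.constantCoeff_X, map_zero,
    zero_pow hr, sub_zero] at h1
  exact one_ne_zero h1

lemma one_sub_qt_pow_ne (r : ℕ) (hr : r ≠ 0) : (1 : K) - q ^ r * t ^ r ≠ 0 := by
  unfold q t
  rw [← map_pow, ← map_pow, ← map_mul, ← map_one (algebraMap (MvPolynomial (Fin 2) ℚ) K),
    ← map_sub]
  intro h
  have hinj := IsFractionRing.injective (MvPolynomial (Fin 2) ℚ) K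
  have h0 : (1 - MvPolynomial.X 0 ^ r * MvPolynomial.X 1 ^ r : MvPolynomial (Fin 2) ℚ) = 0 := by
    apply hinj
    rw [map_zero]
    exact h
  have h1 := congrArg MvPolynomial.constantCoeff h0
  simp only [map_sub, map_one, map_mul, map_pow, MvPolynomial.constantCoeff_X, map_zero,
    zero_pow hr, mul_zero, zero_mul, sub_zero] at h1
  exact one_ne_zero h1

/-! ### lowering operators -/

def ua (r : ℕ) : K := (1 - q ^ r) / (1 - q ^ r * t ^ r)
def ub (r : ℕ) : K := q ^ r * (1 - t ^ r) / (1 - q ^ r * t ^ r)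

def Au (r : ℕ) : K := (r : K) * q ^ r * (1 - q ^ r) / (1 - (q * t) ^ r)
def Bv (r : ℕ) : K := (r : K) * (1 - (q * t) ^ r) / (1 - t ^ r)

def Du (r : ℕ) (P : R) : R :=
  MvPolynomial.C (ua r * wt (Sum.inl r)) * MvPolynomial.pderiv (Sum.inl r) P +
    MvPolynomial.C (ub r * wt (Sum.inr r)) * MvPolynomial.pderiv (Sum.inr r) P

def Dv (r : ℕ) (P : R) : R :=
  MvPolynomial.C (wt (Sum.inr r)) * MvPolynomial.pderiv (Sum.inr r) P -
    MvPolynomial.C (wt (Sum.inl r)) * MvPolynomial.pderiv (Sum.inl r) P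

lemma Gam_u_mul (r : ℕ) (P Q : R) : Gam wt (u r * P) Q = Gam wt P (Du r Q) := by
  have hu : u r * P = MvPolynomial.C (ua r) * (MvPolynomial.X (Sum.inl r) * P) +
      MvPolynomial.C (ub r) * (MvPolynomial.X (Sum.inr r) * P) := by
    rw [u, ubar, vbar, ua, ub]
    ring
  rw [hu, Gam_add_left, Gam_Cmul_left, Gam_Cmul_left, Gam_X_mul, Gam_X_mul, Du,
    Gam_add_right, Gam_Cmul_right, Gam_Cmul_right]
  ring

lemma Gam_v_mul (r : ℕ) (P Q : R) : Gam wt (v r * P) Q = Gam wt P (Dv r Q) := by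
  have hv : v r * P = MvPolynomial.X (Sum.inr r) * P - MvPolynomial.X (Sum.inl r) * P := by
    rw [v, vbar, ubar]
    ring
  rw [hv, Gam_sub_left, Gam_X_mul, Gam_X_mul, Dv, Gam_sub_right, Gam_Cmul_right,
    Gam_Cmul_right]

lemma Du_mul (r : ℕ) (P Q : R) : Du r (P * Q) = Du r P * Q + P * Du r Q := by
  unfold Du
  rw [MvPolynomial.pderiv_mul, MvPolynomial.pderiv_mul]
  ring

lemma Dv_mul (r : ℕ) (P Q : R) : Dv r (P * Q) = Dv r P * Q + P * Dv r Q := by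
  unfold Dv
  rw [MvPolynomial.pderiv_mul, MvPolynomial.pderiv_mul]
  ring

lemma Du_u (r s : ℕ) (hr : r ≠ 0) :
    Du r (u s) = if r = s then MvPolynomial.C (Au r) else 0 := by
  unfold Du u ubar vbar
  simp only [MvPolynomial.pderiv_C_mul, MvPolynomial.pderiv_X, map_add]
  by_cases h : r = s
  · subst h
    rw [if_pos rfl]
    simp only [Pi.single_eq_same, Sum.inl.injEq, Sum.inr.injEq,
      Pi.single_eq_of_ne (by simp : (Sum.inr r : ℕ ⊕ ℕ) ≠ Sum.inl r),
      Pi.single_eq_of_ne (by simp : (Sum.inl r : ℕ ⊕ ℕ) ≠ Sum.inr r)]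
    rw [mul_one, mul_zero, mul_zero, add_zero, zero_add, mul_one]
    rw [← map_mul, ← map_mul, ← map_add]
    congr 1
    have h1 := one_sub_qt_pow_ne r hr
    have h2 := one_sub_t_pow_ne r hr
    rw [Au, ua, ub, wt]
    simp only [Sum.elim_inl, Sum.elim_inr]
    rw [mul_pow]
    field_simp
    ring
  · rw [if_neg h]
    rw [Pi.single_eq_of_ne (fun hh => h (Sum.inl.inj hh).symm),
      Pi.single_eq_of_ne (by simp : (Sum.inr s : ℕ ⊕ ℕ) ≠ Sum.inl r),
      Pi.single_eq_of_ne (by simp : (Sum.inl s : ℕ ⊕ ℕ) ≠ Sum.inr r),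
      Pi.single_eq_of_ne (fun hh => h (Sum.inr.inj hh).symm)]
    ring

lemma Du_v (r s : ℕ) (hr : r ≠ 0) : Du r (v s) = 0 := by
  unfold Du v ubar vbar
  simp only [map_sub, MvPolynomial.pderiv_X]
  by_cases h : r = s
  · subst h
    rw [Pi.single_eq_same, Pi.single_eq_same,
      Pi.single_eq_of_ne (by simp : (Sum.inr r : ℕ ⊕ ℕ) ≠ Sum.inl r),
      Pi.single_eq_of_ne (by simp : (Sum.inl r : ℕ ⊕ ℕ) ≠ Sum.inr r)]
    rw [zero_sub, sub_zero]
    rw [show MvPolynomial.C (ua r * wt (Sum.inl r)) * (-1 : R) +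
        MvPolynomial.C (ub r * wt (Sum.inr r)) * 1
        = MvPolynomial.C (ub r * wt (Sum.inr r) - ua r * wt (Sum.inl r)) from by
      rw [map_sub]; ring]
    rw [show ub r * wt (Sum.inr r) - ua r * wt (Sum.inl r) = 0 from ?_, map_zero]
    have h1 := one_sub_qt_pow_ne r hr
    have h2 := one_sub_t_pow_ne r hr
    rw [ua, ub, wt]
    simp only [Sum.elim_inl, Sum.elim_inr]
    field_simp
    ring
  · rw [Pi.single_eq_of_ne (fun hh => h (Sum.inl.inj hh).symm),
      Pi.single_eq_of_ne (by simp : (Sum.inr s : ℕ ⊕ ℕ) ≠ Sum.inl r),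
      Pi.single_eq_of_ne (by simp : (Sum.inl s : ℕ ⊕ ℕ) ≠ Sum.inr r),
      Pi.single_eq_of_ne (fun hh => h (Sum.inr.inj hh).symm)]
    ring

lemma Dv_u (r s : ℕ) (hr : r ≠ 0) : Dv r (u s) = 0 := by
  unfold Dv u ubar vbar
  simp only [MvPolynomial.pderiv_C_mul, MvPolynomial.pderiv_X, map_add]
  by_cases h : r = s
  · subst h
    rw [Pi.single_eq_same, Pi.single_eq_same,
      Pi.single_eq_of_ne (by simp : (Sum.inr r : ℕ ⊕ ℕ) ≠ Sum.inl r),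
      Pi.single_eq_of_ne (by simp : (Sum.inl r : ℕ ⊕ ℕ) ≠ Sum.inr r)]
    rw [mul_zero, mul_one, mul_zero, mul_one, add_zero, zero_add]
    rw [← map_mul, ← map_mul, ← map_sub]
    rw [show wt (Sum.inr r) * (q ^ r * (1 - t ^ r) / (1 - q ^ r * t ^ r))
        - wt (Sum.inl r) * ((1 - q ^ r) / (1 - q ^ r * t ^ r)) = 0 from ?_, map_zero]
    have h1 := one_sub_qt_pow_ne r hr
    have h2 := one_sub_t_pow_ne r hr
    rw [wt]
    simp only [Sum.elim_inl, Sum.elim_inr]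
    field_simp
    ring
  · rw [Pi.single_eq_of_ne (fun hh => h (Sum.inl.inj hh).symm),
      Pi.single_eq_of_ne (by simp : (Sum.inr s : ℕ ⊕ ℕ) ≠ Sum.inl r),
      Pi.single_eq_of_ne (by simp : (Sum.inl s : ℕ ⊕ ℕ) ≠ Sum.inr r),
      Pi.single_eq_of_ne (fun hh => h (Sum.inr.inj hh).symm)]
    ring

lemma Dv_v (r s : ℕ) (hr : r ≠ 0) :
    Dv r (v s) = if r = s then MvPolynomial.C (Bv r) else 0 := by
  unfold Dv v ubar vbar
  simp only [map_sub, MvPolynomial.pderiv_X]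
  by_cases h : r = s
  · subst h
    rw [if_pos rfl]
    rw [Pi.single_eq_same, Pi.single_eq_same,
      Pi.single_eq_of_ne (by simp : (Sum.inr r : ℕ ⊕ ℕ) ≠ Sum.inl r),
      Pi.single_eq_of_ne (by simp : (Sum.inl r : ℕ ⊕ ℕ) ≠ Sum.inr r)]
    rw [sub_zero, zero_sub, mul_one]
    rw [show MvPolynomial.C (wt (Sum.inr r)) - MvPolynomial.C (wt (Sum.inl r)) * (-1 : R)
        = MvPolynomial.C (wt (Sum.inr r) + wt (Sum.inl r)) from by
      rw [map_add]; ring]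
    congr 1
    have h1 := one_sub_qt_pow_ne r hr
    have h2 := one_sub_t_pow_ne r hr
    rw [Bv, wt]
    simp only [Sum.elim_inl, Sum.elim_inr]
    rw [mul_pow]
    field_simp
    ring
  · rw [if_neg h]
    rw [Pi.single_eq_of_ne (fun hh => h (Sum.inl.inj hh).symm),
      Pi.single_eq_of_ne (by simp : (Sum.inr s : ℕ ⊕ ℕ) ≠ Sum.inl r),
      Pi.single_eq_of_ne (by simp : (Sum.inl s : ℕ ⊕ ℕ) ≠ Sum.inr r),
      Pi.single_eq_of_ne (fun hh => h (Sum.inr.inj hh).symm)]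
    ring

lemma Du_one (r : ℕ) : Du r 1 = 0 := by
  simp [Du]

lemma Dv_one (r : ℕ) : Dv r 1 = 0 := by
  simp [Dv]

lemma Du_prod_v (r : ℕ) (hr : r ≠ 0) (O : Multiset ℕ) :
    Du r ((O.map v).prod) = 0 := by
  induction O using Multiset.induction with
  | empty => simpa using Du_one r
  | cons a O ih =>
    rw [Multiset.map_cons, Multiset.prod_cons, Du_mul, Du_v r a hr, ih]
    simp

lemma Dv_prod_u (r : ℕ) (hr : r ≠ 0) (N : Multiset ℕ) :
    Dv r ((N.map u).prod) = 0 := by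
  induction N using Multiset.induction with
  | empty => simpa using Dv_one r
  | cons a N ih =>
    rw [Multiset.map_cons, Multiset.prod_cons, Dv_mul, Dv_u r a hr, ih]
    simp

lemma Du_prod_u (r : ℕ) (hr : r ≠ 0) (N : Multiset ℕ) :
    Du r ((N.map u).prod) =
      MvPolynomial.C (Au r * (N.count r : K)) * ((N.erase r).map u).prod := by
  induction N using Multiset.induction with
  | empty => simpa using Du_one r
  | cons a N ih =>
    rw [Multiset.map_cons, Multiset.prod_cons, Du_mul, Du_u r a hr, ih]
    by_cases h : r = a
    · subst h
      rw [if_pos rfl, Multiset.count_cons_self, Multiset.erase_cons_head]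
      by_cases hrN : r ∈ N
      · have hre : u r * ((N.erase r).map u).prod = (N.map u).prod := by
          conv_rhs => rw [← Multiset.cons_erase hrN]
          rw [Multiset.map_cons, Multiset.prod_cons]
        rw [show u r * (MvPolynomial.C (Au r * (N.count r : K)) * ((N.erase r).map u).prod)
            = MvPolynomial.C (Au r * (N.count r : K)) * (u r * ((N.erase r).map u).prod)
            from by ring, hre, ← add_mul, ← map_add]
        congr 2
        push_cast
        ring
      · rw [Multiset.count_eq_zero_of_notMem hrN]
        push_cast
        rw [mul_zero, map_zero, zero_mul, mul_zero, add_zero, mul_one]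
    · rw [if_neg h, zero_mul, zero_add, Multiset.count_cons_of_ne h,
        Multiset.erase_cons_tail _ (fun hh => h hh.symm), Multiset.map_cons,
        Multiset.prod_cons]
      ring

lemma Dv_prod_v (r : ℕ) (hr : r ≠ 0) (O : Multiset ℕ) :
    Dv r ((O.map v).prod) =
      MvPolynomial.C (Bv r * (O.count r : K)) * ((O.erase r).map v).prod := by
  induction O using Multiset.induction with
  | empty => simpa using Dv_one r
  | cons a O ih =>
    rw [Multiset.map_cons, Multiset.prod_cons, Dv_mul, Dv_v r a hr, ih]
    by_cases h : r = a
    · subst h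
      rw [if_pos rfl, Multiset.count_cons_self, Multiset.erase_cons_head]
      by_cases hrO : r ∈ O
      · have hre : v r * ((O.erase r).map v).prod = (O.map v).prod := by
          conv_rhs => rw [← Multiset.cons_erase hrO]
          rw [Multiset.map_cons, Multiset.prod_cons]
        rw [show v r * (MvPolynomial.C (Bv r * (O.count r : K)) * ((O.erase r).map v).prod)
            = MvPolynomial.C (Bv r * (O.count r : K)) * (v r * ((O.erase r).map v).prod)
            from by ring, hre, ← add_mul, ← map_add]
        congr 2
        push_cast
        ring
      · rw [Multiset.count_eq_zero_of_notMem hrO]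
        push_cast
        rw [mul_zero, map_zero, zero_mul, mul_zero, add_zero, mul_one]
    · rw [if_neg h, zero_mul, zero_add, Multiset.count_cons_of_ne h,
        Multiset.erase_cons_tail _ (fun hh => h hh.symm), Multiset.map_cons,
        Multiset.prod_cons]
      ring

/-! ### the core computation -/

lemma constantCoeff_u (r : ℕ) : MvPolynomial.constantCoeff (u r) = 0 := by
  rw [u, ubar, vbar, map_add, map_mul, map_mul, MvPolynomial.constantCoeff_X,
    MvPolynomial.constantCoeff_X]
  ring

lemma constantCoeff_v (r : ℕ) : MvPolynomial.constantCoeff (v r) = 0 := by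
  rw [v, ubar, vbar, map_sub, MvPolynomial.constantCoeff_X, MvPolynomial.constantCoeff_X]
  ring

lemma coeff_zero_prod_u (N : Multiset ℕ) :
    MvPolynomial.constantCoeff ((N.map u).prod) = if N = 0 then 1 else 0 := by
  by_cases hN : N = 0
  · subst hN
    simp
  · obtain ⟨a, ha⟩ := Multiset.exists_mem_of_ne_zero hN
    have hsplit : (N.map u).prod = u a * ((N.erase a).map u).prod := by
      conv_lhs => rw [← Multiset.cons_erase ha]
      rw [Multiset.map_cons, Multiset.prod_cons]
    rw [hsplit, map_mul, constantCoeff_u, zero_mul, if_neg hN]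

lemma coeff_zero_prod_v (O : Multiset ℕ) :
    MvPolynomial.constantCoeff ((O.map v).prod) = if O = 0 then 1 else 0 := by
  by_cases hO : O = 0
  · subst hO
    simp
  · obtain ⟨a, ha⟩ := Multiset.exists_mem_of_ne_zero hO
    have hsplit : (O.map v).prod = v a * ((O.erase a).map v).prod := by
      conv_lhs => rw [← Multiset.cons_erase ha]
      rw [Multiset.map_cons, Multiset.prod_cons]
    rw [hsplit, map_mul, constantCoeff_v, zero_mul, if_neg hO]

lemma core0 : ∀ M : Multiset ℕ, (∀ x ∈ M, x ≠ 0) → ∀ N O : Multiset ℕ,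
    Gam wt ((M.map v).prod) ((N.map u).prod * (O.map v).prod) =
      if N = 0 ∧ M = O then (M.map Bv).prod * (cfact M : K) else 0 := by
  intro M
  induction M using Multiset.induction with
  | empty =>
    intro _ N O
    rw [Multiset.map_zero, Multiset.prod_zero, Gam_one_left]
    have hcc : MvPolynomial.coeff 0 ((N.map u).prod * (O.map v).prod)
        = MvPolynomial.constantCoeff ((N.map u).prod * (O.map v).prod) := rfl
    rw [hcc, map_mul, coeff_zero_prod_u, coeff_zero_prod_v]
    by_cases hN : N = 0 <;> by_cases hO : O = 0 <;>
      simp [hN, hO, cfact_zero, eq_comm]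
  | cons r M ih =>
    intro hM N O
    have hr : r ≠ 0 := hM r (Multiset.mem_cons_self r M)
    have hM' : ∀ x ∈ M, x ≠ 0 := fun x hx => hM x (Multiset.mem_cons_of_mem hx)
    rw [Multiset.map_cons, Multiset.prod_cons, Gam_v_mul, Dv_mul,
      Dv_prod_u r hr N, zero_mul, zero_add, Dv_prod_v r hr O]
    rw [show (N.map u).prod * (MvPolynomial.C (Bv r * (O.count r : K)) * ((O.erase r).map v).prod)
        = MvPolynomial.C (Bv r * (O.count r : K)) * ((N.map u).prod * ((O.erase r).map v).prod)
        from by ring]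
    rw [Gam_Cmul_right, ih hM' N (O.erase r)]
    by_cases hO : r ∈ O
    · by_cases hc : N = 0 ∧ M = O.erase r
      · have hcons : r ::ₘ M = O := by
          rw [hc.2]
          exact Multiset.cons_erase hO
        rw [if_pos hc, if_pos ⟨hc.1, hcons⟩, Multiset.map_cons, Multiset.prod_cons, cfact_cons]
        have hcount : O.count r = M.count r + 1 := by
          rw [← hcons, Multiset.count_cons_self]
        rw [hcount]
        push_cast
        ring
      · rw [if_neg hc, if_neg (fun hcon => hc ⟨hcon.1, by
          rw [← hcon.2, Multiset.erase_cons_head]⟩)]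
        ring
    · rw [Multiset.count_eq_zero_of_notMem hO,
        if_neg (fun hcon : N = 0 ∧ r ::ₘ M = O => hO (hcon.2 ▸ Multiset.mem_cons_self r M))]
      push_cast
      ring

lemma core : ∀ L : Multiset ℕ, (∀ x ∈ L, x ≠ 0) → ∀ M : Multiset ℕ, (∀ x ∈ M, x ≠ 0) →
    ∀ N O : Multiset ℕ,
    Gam wt ((L.map u).prod * (M.map v).prod) ((N.map u).prod * (O.map v).prod) =
      if L = N ∧ M = O then
        ((L.map Au).prod * (cfact L : K)) * ((M.map Bv).prod * (cfact M : K))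
      else 0 := by
  intro L
  induction L using Multiset.induction with
  | empty =>
    intro _ M hM N O
    rw [Multiset.map_zero, Multiset.prod_zero, one_mul, core0 M hM N O]
    have hiff : (N = 0 ∧ M = O) ↔ ((0 : Multiset ℕ) = N ∧ M = O) := by
      rw [eq_comm]
    rw [if_congr hiff rfl rfl]
    by_cases hc : (0 : Multiset ℕ) = N ∧ M = O
    · rw [if_pos hc, if_pos hc]
      simp [cfact_zero]
    · rw [if_neg hc, if_neg hc]
  | cons r L ih =>
    intro hL M hM N O
    have hr : r ≠ 0 := hL r (Multiset.mem_cons_self r L)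
    have hL' : ∀ x ∈ L, x ≠ 0 := fun x hx => hL x (Multiset.mem_cons_of_mem hx)
    rw [Multiset.map_cons, Multiset.prod_cons, mul_assoc, Gam_u_mul, Du_mul,
      Du_prod_u r hr N, Du_prod_v r hr O, mul_zero, add_zero, mul_assoc,
      Gam_Cmul_right, ih hL' M hM (N.erase r) O]
    by_cases hN : r ∈ N
    · by_cases hc : L = N.erase r ∧ M = O
      · have hcons : r ::ₘ L = N := by
          rw [hc.1]
          exact Multiset.cons_erase hN
        rw [if_pos hc, if_pos ⟨hcons, hc.2⟩, Multiset.map_cons, Multiset.prod_cons, cfact_cons]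
        have hcount : N.count r = L.count r + 1 := by
          rw [← hcons, Multiset.count_cons_self]
        rw [hcount]
        push_cast
        ring
      · rw [if_neg hc, if_neg (fun hcon => hc ⟨by
          rw [← hcon.1, Multiset.erase_cons_head], hcon.2⟩)]
        ring
    · rw [Multiset.count_eq_zero_of_notMem hN,
        if_neg (fun hcon : r ::ₘ L = N ∧ M = O => hN (hcon.1 ▸ Multiset.mem_cons_self r L))]
      push_cast
      ring

/-! ### the span argument -/

def gen (L M : Multiset ℕ) : R :=
  MvPolynomial.monomial (Multiset.toFinsupp (L.map Sum.inl + M.map Sum.inr)) 1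

def Sgen : Set R :=
  {x | ∃ L M : Multiset ℕ, (∀ a ∈ L, a ≠ 0) ∧ (∀ a ∈ M, a ≠ 0) ∧ x = gen L M}

lemma gen_mul (L M L' M' : Multiset ℕ) :
    gen L M * gen L' M' = gen (L + L') (M + M') := by
  unfold gen
  rw [MvPolynomial.monomial_mul, one_mul, ← Multiset.toFinsupp_add]
  congr 2
  rw [Multiset.map_add, Multiset.map_add]
  exact congrArg _ (add_add_add_comm (L.map Sum.inl) (M.map Sum.inr) (L'.map Sum.inl) (M'.map Sum.inr))

lemma prod_X_map (m : Multiset (ℕ ⊕ ℕ)) :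
    ((m.map (MvPolynomial.X : (ℕ ⊕ ℕ) → R)).prod) =
      MvPolynomial.monomial (Multiset.toFinsupp m) 1 := by
  induction m using Multiset.induction with
  | empty =>
    simp only [Multiset.map_zero, Multiset.prod_zero, Multiset.toFinsupp_zero]
    rw [MvPolynomial.monomial_zero', map_one]
  | cons a m ih =>
    rw [Multiset.map_cons, Multiset.prod_cons, ih,
      show (MvPolynomial.X a : R) = MvPolynomial.monomial (Finsupp.single a 1) 1 from rfl,
      MvPolynomial.monomial_mul, one_mul]
    congr 1
    rw [← Multiset.singleton_add, Multiset.toFinsupp_add, Multiset.toFinsupp_singleton]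

lemma ubar_vbar_prod (κ ρ : ℕ → ℕ) (hκ : IsPartition κ) (hρ : IsPartition ρ) :
    prodOf ubar κ * prodOf vbar ρ = gen (parts κ) (parts ρ) := by
  rw [prodOf_eq ubar κ hκ, prodOf_eq vbar ρ hρ]
  have h1 : (parts κ).map ubar = ((parts κ).map Sum.inl).map (MvPolynomial.X : (ℕ ⊕ ℕ) → R) := by
    rw [Multiset.map_map]
    rfl
  have h2 : (parts ρ).map vbar = ((parts ρ).map Sum.inr).map (MvPolynomial.X : (ℕ ⊕ ℕ) → R) := by
    rw [Multiset.map_map]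
    rfl
  rw [h1, h2, prod_X_map, prod_X_map, MvPolynomial.monomial_mul, one_mul, gen,
    Multiset.toFinsupp_add]

lemma span_mul_mem {p w : R} (hp : p ∈ Submodule.span K Sgen)
    (hw : w ∈ Submodule.span K Sgen) : p * w ∈ Submodule.span K Sgen := by
  have hgen : ∀ x ∈ Sgen, ∀ p' ∈ Submodule.span K Sgen, x * p' ∈ Submodule.span K Sgen := by
    rintro x ⟨L, M, hL, hM, rfl⟩ p' hp'
    induction hp' using Submodule.span_induction with
    | mem y hy =>
      obtain ⟨L', M', hL', hM', rfl⟩ := hy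
      apply Submodule.subset_span
      rw [gen_mul]
      refine ⟨L + L', M + M', fun a ha => ?_, fun a ha => ?_, rfl⟩
      · rcases Multiset.mem_add.mp ha with h | h
        exacts [hL a h, hL' a h]
      · rcases Multiset.mem_add.mp ha with h | h
        exacts [hM a h, hM' a h]
    | zero =>
      rw [mul_zero]
      exact Submodule.zero_mem _
    | add y z hy hz ihy ihz =>
      rw [mul_add]
      exact Submodule.add_mem _ ihy ihz
    | smul c y hy ihy =>
      rw [mul_smul_comm]
      exact Submodule.smul_mem _ _ ihy
  induction hp using Submodule.span_induction with
  | mem x hx => exact hgen x hx w hw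
  | zero =>
    rw [zero_mul]
    exact Submodule.zero_mem _
  | add y z hy hz ihy ihz =>
    rw [add_mul]
    exact Submodule.add_mem _ ihy ihz
  | smul c y hy ihy =>
    rw [smul_mul_assoc]
    exact Submodule.smul_mem _ _ ihy

lemma one_mem_span : (1 : R) ∈ Submodule.span K Sgen := by
  apply Submodule.subset_span
  refine ⟨0, 0, by simp, by simp, ?_⟩
  unfold gen
  simp only [Multiset.map_zero, add_zero, Multiset.toFinsupp_zero]
  rw [MvPolynomial.monomial_zero', map_one]

lemma X_inl_mem (r : ℕ) (hr : r ≠ 0) : (MvPolynomial.X (Sum.inl r) : R) ∈ Sgen := by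
  refine ⟨{r}, 0, by simpa using hr, by simp, ?_⟩
  unfold gen
  simp only [Multiset.map_singleton, Multiset.map_zero, add_zero, Multiset.toFinsupp_singleton]
  rfl

lemma X_inr_mem (r : ℕ) (hr : r ≠ 0) : (MvPolynomial.X (Sum.inr r) : R) ∈ Sgen := by
  refine ⟨0, {r}, by simp, by simpa using hr, ?_⟩
  unfold gen
  simp only [Multiset.map_singleton, Multiset.map_zero, zero_add, Multiset.toFinsupp_singleton]
  rfl

lemma u_mem (r : ℕ) (hr : r ≠ 0) : u r ∈ Submodule.span K Sgen := by
  rw [u, ubar, vbar, MvPolynomial.C_mul', MvPolynomial.C_mul']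
  exact Submodule.add_mem _
    (Submodule.smul_mem _ _ (Submodule.subset_span (X_inl_mem r hr)))
    (Submodule.smul_mem _ _ (Submodule.subset_span (X_inr_mem r hr)))

lemma v_mem (r : ℕ) (hr : r ≠ 0) : v r ∈ Submodule.span K Sgen := by
  rw [v, ubar, vbar]
  exact Submodule.sub_mem _
    (Submodule.subset_span (X_inr_mem r hr))
    (Submodule.subset_span (X_inl_mem r hr))

lemma prod_map_mem (w : ℕ → R) (hw : ∀ r : ℕ, r ≠ 0 → w r ∈ Submodule.span K Sgen) :
    ∀ L : Multiset ℕ, (∀ x ∈ L, x ≠ 0) →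
    (L.map w).prod ∈ Submodule.span K Sgen := by
  intro L
  induction L using Multiset.induction with
  | empty =>
    intro _
    simpa using one_mem_span
  | cons a L ih =>
    intro hL
    rw [Multiset.map_cons, Multiset.prod_cons]
    exact span_mul_mem (hw a (hL a (Multiset.mem_cons_self a L)))
      (ih fun x hx => hL x (Multiset.mem_cons_of_mem hx))

lemma addmap_inj {L M L' M' : Multiset ℕ}
    (h : L.map Sum.inl + M.map Sum.inr = L'.map Sum.inl + M'.map Sum.inr) :
    L = L' ∧ M = M' := by
  constructor
  · apply Multiset.ext.mpr
    intro a
    have h' := congrArg (Multiset.count (Sum.inl a : ℕ ⊕ ℕ)) h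
    rw [Multiset.count_add, Multiset.count_add,
      Multiset.count_map_eq_count' _ _ Sum.inl_injective,
      Multiset.count_map_eq_count' _ _ Sum.inl_injective,
      Multiset.count_eq_zero.mpr (by simp : (Sum.inl a : ℕ ⊕ ℕ) ∉ M.map Sum.inr),
      Multiset.count_eq_zero.mpr (by simp : (Sum.inl a : ℕ ⊕ ℕ) ∉ M'.map Sum.inr)] at h'
    omega
  · apply Multiset.ext.mpr
    intro a
    have h' := congrArg (Multiset.count (Sum.inr a : ℕ ⊕ ℕ)) h
    rw [Multiset.count_add, Multiset.count_add,
      Multiset.count_map_eq_count' _ _ Sum.inr_injective,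
      Multiset.count_map_eq_count' _ _ Sum.inr_injective,
      Multiset.count_eq_zero.mpr (by simp : (Sum.inr a : ℕ ⊕ ℕ) ∉ L.map Sum.inl),
      Multiset.count_eq_zero.mpr (by simp : (Sum.inr a : ℕ ⊕ ℕ) ∉ L'.map Sum.inl)] at h'
    omega

lemma cfact_map_inj {α β : Type*} [DecidableEq α] [DecidableEq β] (f : α → β)
    (hf : Function.Injective f) (L : Multiset α) : cfact (L.map f) = cfact L := by
  unfold cfact
  rw [Multiset.toFinset_map, Finset.prod_image (fun x _ y _ hxy => hf hxy)]
  exact Finset.prod_congr rfl fun x _ => by rw [Multiset.count_map_eq_count' _ _ hf]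

lemma cfact_add_disjoint {α : Type*} [DecidableEq α] (m₁ m₂ : Multiset α)
    (h : Disjoint m₁.toFinset m₂.toFinset) : cfact (m₁ + m₂) = cfact m₁ * cfact m₂ := by
  unfold cfact
  rw [Multiset.toFinset_add, Finset.prod_union h]
  congr 1
  · refine Finset.prod_congr rfl fun x hx => ?_
    rw [Multiset.count_add,
      Multiset.count_eq_zero_of_notMem
        (fun hm => Finset.disjoint_left.mp h hx (Multiset.mem_toFinset.mpr hm)),
      add_zero]
  · refine Finset.prod_congr rfl fun x hx => ?_
    rw [Multiset.count_add,
      Multiset.count_eq_zero_of_notMem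
        (fun hm => Finset.disjoint_right.mp h hx (Multiset.mem_toFinset.mpr hm)),
      zero_add]

lemma W_toFinsupp (m : Multiset (ℕ ⊕ ℕ)) :
    W wt (Multiset.toFinsupp m) = (cfact m : K) * (m.map wt).prod := by
  unfold W
  rw [Finsupp.prod, Multiset.toFinsupp_support]
  rw [Finset.prod_congr rfl fun x _ => by rw [Multiset.toFinsupp_apply]]
  rw [Finset.prod_mul_distrib, ← Finset.prod_multiset_map_count]
  congr 1
  rw [cfact, Nat.cast_prod]

lemma prod_map_pow_sum (L : Multiset ℕ) : q ^ L.sum = (L.map (q ^ ·)).prod := by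
  induction L using Multiset.induction with
  | empty => simp
  | cons a L ih => rw [Multiset.sum_cons, pow_add, ih, Multiset.map_cons, Multiset.prod_cons]

lemma hB_value (L M : Multiset ℕ) (hL : ∀ a ∈ L, a ≠ 0) (hM : ∀ a ∈ M, a ≠ 0) :
    q ^ psize (fromM L) * (zstat (fromM L) : K) * zqt q t (fromM M) =
      W wt (Multiset.toFinsupp (L.map Sum.inl + M.map Sum.inr)) := by
  rw [psize_eq _ (fromM_isPartition L), zstat_eq _ (fromM_isPartition L),
    zqt_eq q t _ (fromM_isPartition M), parts_fromM L hL, parts_fromM M hM]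
  rw [W_toFinsupp]
  have hdisj : Disjoint (L.map Sum.inl).toFinset (M.map Sum.inr).toFinset := by
    rw [Finset.disjoint_left]
    intro x hx hx'
    rw [Multiset.mem_toFinset, Multiset.mem_map] at hx hx'
    obtain ⟨a, -, rfl⟩ := hx
    obtain ⟨b, -, hb⟩ := hx'
    exact Sum.inr_ne_inl hb
  rw [cfact_add_disjoint _ _ hdisj, cfact_map_inj _ Sum.inl_injective,
    cfact_map_inj _ Sum.inr_injective]
  rw [Multiset.map_add, Multiset.prod_add, Multiset.map_map, Multiset.map_map]
  have hwl : Multiset.map (wt ∘ Sum.inl) L = Multiset.map (fun r : ℕ => (r : K) * q ^ r) L :=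
    Multiset.map_congr rfl fun x _ => by simp [wt]
  have hwr : Multiset.map (wt ∘ Sum.inr) M
      = Multiset.map (fun r : ℕ => (r : K) * ((1 - q ^ r) / (1 - t ^ r))) M :=
    Multiset.map_congr rfl fun x _ => by rw [Function.comp_apply, wt]; simp [mul_div_assoc]
  rw [hwl, hwr, prod_map_pow_sum]
  push_cast
  have h1 : (Multiset.map (q ^ ·) L).prod * (Multiset.map (fun r : ℕ => (r : K)) L).prod
      = (Multiset.map (fun r : ℕ => (r : K) * q ^ r) L).prod := by
    rw [← Multiset.prod_map_mul]
    exact congrArg Multiset.prod (Multiset.map_congr rfl fun x _ => by ring)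
  have hcast : Multiset.map (fun r : ℕ => (r : K)) L = Multiset.map Nat.cast L := rfl
  rw [← h1, hcast]
  ring

lemma B_eq_Gam (B : R →ₗ[K] R →ₗ[K] K)
    (hB : ∀ lam mu nu om : ℕ → ℕ, IsPartition lam → IsPartition mu →
        IsPartition nu → IsPartition om →
      B (prodOf ubar lam * prodOf vbar mu) (prodOf ubar nu * prodOf vbar om) =
        if lam = nu ∧ mu = om then q ^ psize lam * (zstat lam : K) * zqt q t mu else 0)
    {p w : R} (hp : p ∈ Submodule.span K Sgen) (hw : w ∈ Submodule.span K Sgen) :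
    B p w = Gam wt p w := by
  induction hp using Submodule.span_induction with
  | mem x hx =>
    induction hw using Submodule.span_induction with
    | mem y hy =>
      obtain ⟨L, M, hL, hM, rfl⟩ := hx
      obtain ⟨L', M', hL', hM', rfl⟩ := hy
      have hBval := hB (fromM L) (fromM M) (fromM L') (fromM M')
        (fromM_isPartition L) (fromM_isPartition M) (fromM_isPartition L') (fromM_isPartition M')
      rw [ubar_vbar_prod _ _ (fromM_isPartition L) (fromM_isPartition M),
        ubar_vbar_prod _ _ (fromM_isPartition L') (fromM_isPartition M'),
        parts_fromM L hL, parts_fromM M hM, parts_fromM L' hL', parts_fromM M' hM'] at hBval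
      rw [hBval]
      rw [show gen L M = MvPolynomial.monomial (Multiset.toFinsupp (L.map Sum.inl + M.map Sum.inr)) 1 from rfl,
        show gen L' M' = MvPolynomial.monomial (Multiset.toFinsupp (L'.map Sum.inl + M'.map Sum.inr)) 1 from rfl,
        Gam_monomial, one_mul]
      by_cases hc : L = L' ∧ M = M'
      · obtain ⟨rfl, rfl⟩ := hc
        rw [if_pos ⟨rfl, rfl⟩, if_pos rfl, hB_value L M hL hM]
        exact (one_mul _).symm
      · have h1 : ¬(fromM L = fromM L' ∧ fromM M = fromM M') := by
          rintro ⟨h1, h2⟩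
          exact hc ⟨by rw [← parts_fromM L hL, ← parts_fromM L' hL', h1],
            by rw [← parts_fromM M hM, ← parts_fromM M' hM', h2]⟩
        have h2 : ¬(Multiset.toFinsupp (L.map Sum.inl + M.map Sum.inr)
            = Multiset.toFinsupp (L'.map Sum.inl + M'.map Sum.inr)) := by
          intro h
          exact hc (addmap_inj (Multiset.toFinsupp.injective h))
        rw [if_neg h1, if_neg h2]
    | zero =>
      rw [map_zero, Gam_zero_right]
    | add y z hy hz ihy ihz =>
      rw [map_add, Gam_add_right, ihy, ihz]
    | smul c y hy ihy =>
      rw [map_smul, Gam_smul_right, ihy]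
      rfl
  | zero =>
    rw [map_zero, LinearMap.zero_apply, Gam_zero_left]
  | add y z hy hz ihy ihz =>
    rw [map_add, LinearMap.add_apply, Gam_add_left, ihy, ihz]
  | smul c y hy ihy =>
    rw [map_smul, LinearMap.smul_apply, Gam_smul_left, ihy]
    rfl

/-- **Equivalence of the two scalar products** (Lemma 3.1, algebraic form).
Let `B` be a `K`-bilinear form on `R` satisfying, on the monomial basis,
`B(ū_λ v̄_μ, ū_ν v̄_ω) = δ_{λν} δ_{μω} q^{|λ|} z_λ z_μ(q,t)`.  Then for all partitions
`λ, μ, ν, ω`: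
`B(u_λ v_μ, u_ν v_ω) = δ_{λν} δ_{μω} q^{|λ|} z_λ(q,qt) z_μ(qt,t)`. -/
theorem scalar_products_equivalent
    (B : R →ₗ[K] R →ₗ[K] K)
    (hB : ∀ lam mu nu om : ℕ → ℕ, IsPartition lam → IsPartition mu →
        IsPartition nu → IsPartition om →
      B (prodOf ubar lam * prodOf vbar mu) (prodOf ubar nu * prodOf vbar om) =
        if lam = nu ∧ mu = om then q ^ psize lam * (zstat lam : K) * zqt q t mu else 0)
    (lam mu nu om : ℕ → ℕ)
    (hlam : IsPartition lam) (hmu : IsPartition mu)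
    (hnu : IsPartition nu) (hom : IsPartition om) :
    B (prodOf u lam * prodOf v mu) (prodOf u nu * prodOf v om) =
      if lam = nu ∧ mu = om then
        q ^ psize lam * zqt q (q * t) lam * zqt (q * t) t mu
      else 0 := by
  have hplam : ∀ x ∈ parts lam, x ≠ 0 := fun x hx => parts_ne_zero hx
  have hpmu : ∀ x ∈ parts mu, x ≠ 0 := fun x hx => parts_ne_zero hx
  have hpnu : ∀ x ∈ parts nu, x ≠ 0 := fun x hx => parts_ne_zero hx
  have hpom : ∀ x ∈ parts om, x ≠ 0 := fun x hx => parts_ne_zero hx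
  rw [prodOf_eq u lam hlam, prodOf_eq v mu hmu, prodOf_eq u nu hnu, prodOf_eq v om hom]
  rw [B_eq_Gam B hB
    (span_mul_mem (prod_map_mem u u_mem _ hplam) (prod_map_mem v v_mem _ hpmu))
    (span_mul_mem (prod_map_mem u u_mem _ hpnu) (prod_map_mem v v_mem _ hpom))]
  rw [core (parts lam) hplam (parts mu) hpmu (parts nu) (parts om)]
  have hcond : (parts lam = parts nu ∧ parts mu = parts om) ↔ (lam = nu ∧ mu = om) := by
    constructor
    · rintro ⟨h1, h2⟩
      exact ⟨parts_inj hlam hnu h1, parts_inj hmu hom h2⟩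
    · rintro ⟨rfl, rfl⟩
      exact ⟨rfl, rfl⟩
  rw [if_congr hcond rfl rfl]
  by_cases h : lam = nu ∧ mu = om
  · rw [if_pos h, if_pos h]
    rw [psize_eq lam hlam, zqt_eq q (q * t) lam hlam, zqt_eq (q * t) t mu hmu,
      prod_map_pow_sum]
    have hA : (Multiset.map (q ^ ·) (parts lam)).prod *
        (Multiset.map (fun r : ℕ => (r : K) * ((1 - q ^ r) / (1 - (q * t) ^ r))) (parts lam)).prod
        = (Multiset.map Au (parts lam)).prod := by
      rw [← Multiset.prod_map_mul]
      exact congrArg Multiset.prod (Multiset.map_congr rfl fun x _ => by rw [Au]; ring)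
    have hBv : Multiset.map (fun r : ℕ => (r : K) * ((1 - (q * t) ^ r) / (1 - t ^ r))) (parts mu)
        = Multiset.map Bv (parts mu) :=
      Multiset.map_congr rfl fun x _ => by rw [Bv]; ring
    rw [hBv, ← hA]
    ring
  · rw [if_neg h, if_neg h]

end DoubleMacdonald
end
end

section
/- Conjugation in the stable sector (Lemma B.4). Let λ and μ be partitions and let m be an integer with m ≥ |λ| + |μ|. Then the conjugate of the partition (λ + δ^m) ∪ μ equals (μ' + δ^m) ∪ λ', i.e. ((λ + δ^m) ∪ μ)' = (μ' + δ^m) ∪ λ'. -/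
noncomputable section

namespace DoubleMacdonald

/-- The number `ℓ(λ)` of nonzero parts of a partition. -/
def plen (f : ℕ → ℕ) : ℕ := Nat.card {i : ℕ | 1 ≤ f i}

/-- The conjugate partition: `λ'ⱼ = #{i : λᵢ ≥ j}` (0-indexed: `conj f j = λ'_{j+1}`). -/
def conj (f : ℕ → ℕ) : ℕ → ℕ := fun j => Nat.card {i : ℕ | j + 1 ≤ f i}

/-- The staircase partition `δ^m = (m-1, m-2, …, 1, 0)`. -/
def delta (m : ℕ) : ℕ → ℕ := fun i => m - 1 - i

/-- Componentwise sum of partitions. -/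
def addF (f g : ℕ → ℕ) : ℕ → ℕ := fun i => f i + g i

/-- Union `λ ∪ μ` of partitions: the weakly decreasing rearrangement of the combined
multiset of parts, defined via `(λ ∪ μ)' = λ' + μ'`. -/
def unionF (f g : ℕ → ℕ) : ℕ → ℕ := conj (addF (conj f) (conj g))

/-- Partial sum `λ₁ + ⋯ + λ_k`. -/
def psum (f : ℕ → ℕ) (k : ℕ) : ℕ := ∑ i ∈ Finset.range k, f i

/-- The statistic `n(λ) = Σᵢ (i-1) λᵢ`. -/
def nstat (f : ℕ → ℕ) : ℕ := ∑ᶠ i, i * f i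

/-- The (extended) dominance order: `f ⪰ g` iff all partial sums of `f` dominate those of `g`. -/
def Dominates (f g : ℕ → ℕ) : Prop := ∀ k, psum g k ≤ psum f k

/-! ### Auxiliary lemmas -/

lemma IsPartition.exists_le {f : ℕ → ℕ} (hf : IsPartition f) (j : ℕ) : ∃ i, f i ≤ j := by
  obtain ⟨N, hN⟩ := hf.2
  exact ⟨N, by rw [hN N le_rfl]; omega⟩

/-- The cell lemma: `(t, j)` is a cell of `f` iff `(j, t)` is a cell of `conj f`. -/
lemma conj_cell {f : ℕ → ℕ} (hf : IsPartition f) (t j : ℕ) :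
    t + 1 ≤ conj f j ↔ j + 1 ≤ f t := by
  have hex := hf.exists_le j
  have hset : {i : ℕ | j + 1 ≤ f i} = Set.Iio (Nat.find hex) := by
    ext i
    simp only [Set.mem_setOf_eq, Set.mem_Iio]
    constructor
    · intro h
      by_contra hc
      push_neg at hc
      have h1 := hf.1 hc
      have h2 := Nat.find_spec hex
      omega
    · intro h
      have := Nat.find_min hex h
      omega
  have hcard : conj f j = Nat.find hex := by
    rw [conj, hset, Nat.card_eq_fintype_card, ← Nat.card_eq_fintype_card, Nat.card_coe_set_eq, Set.ncard_Iio_nat]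
  have hmem : j + 1 ≤ f t ↔ t ∈ ({i : ℕ | j + 1 ≤ f i}) := Iff.rfl
  rw [hcard, hmem, hset]
  simp only [Set.mem_Iio]
  omega

lemma isPartition_conj {f : ℕ → ℕ} (hf : IsPartition f) : IsPartition (conj f) := by
  constructor
  · intro i j hij
    by_contra h
    push_neg at h
    have h1 : conj f i + 1 ≤ conj f j := h
    rw [conj_cell hf] at h1
    have h2 : ¬ (conj f i + 1 ≤ conj f i) := by omega
    rw [conj_cell hf] at h2
    omega
  · refine ⟨f 0, fun j hj => ?_⟩
    by_contra h
    have h1 : 0 + 1 ≤ conj f j := by omega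
    rw [conj_cell hf] at h1
    omega

lemma conj_conj {f : ℕ → ℕ} (hf : IsPartition f) : conj (conj f) = f := by
  funext t
  have hc := isPartition_conj hf
  apply le_antisymm
  · by_contra h
    push_neg at h
    have h1 : f t + 1 ≤ conj (conj f) t := h
    rw [conj_cell hc, conj_cell hf] at h1
    omega
  · by_contra h
    push_neg at h
    have h1 : conj (conj f) t + 1 ≤ f t := h
    have h2 : ¬ (conj (conj f) t + 1 ≤ conj (conj f) t) := by omega
    rw [conj_cell hc, conj_cell hf] at h2
    omega

lemma isPartition_delta (m : ℕ) : IsPartition (delta m) := by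
  constructor
  · intro i j hij
    simp only [delta]
    omega
  · exact ⟨m, fun i hi => by simp only [delta]; omega⟩

lemma conj_delta (m : ℕ) : conj (delta m) = delta m := by
  funext j
  have hd := isPartition_delta m
  apply le_antisymm
  · by_contra h
    push_neg at h
    have h1 : delta m j + 1 ≤ conj (delta m) j := h
    rw [conj_cell hd] at h1
    simp only [delta] at h1 ⊢
    omega
  · by_contra h
    push_neg at h
    have h2 : ¬ (conj (delta m) j + 1 ≤ conj (delta m) j) := by omega
    rw [conj_cell hd] at h2
    simp only [delta] at h2 h
    omega

lemma isPartition_add {f g : ℕ → ℕ} (hf : IsPartition f) (hg : IsPartition g) :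
    IsPartition (addF f g) := by
  obtain ⟨N, hN⟩ := hf.2
  obtain ⟨M, hM⟩ := hg.2
  refine ⟨fun i j h => Nat.add_le_add (hf.1 h) (hg.1 h), ⟨max N M, fun i hi => ?_⟩⟩
  simp only [addF]
  rw [hN i (by omega), hM i (by omega)]

lemma sum_range_le_psize {f : ℕ → ℕ} (hf : IsPartition f) (n : ℕ) :
    ∑ i ∈ Finset.range n, f i ≤ psize f := by
  obtain ⟨N, hN⟩ := hf.2
  have hsupp : Function.support f ⊆ ↑(Finset.range (max n N)) := by
    intro i hi
    simp only [Finset.coe_range, Set.mem_Iio]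
    by_contra h
    push_neg at h
    exact hi (hN i (by omega))
  have heq : psize f = ∑ i ∈ Finset.range (max n N), f i :=
    finsum_eq_sum_of_support_subset f hsupp
  rw [heq]
  exact Finset.sum_le_sum_of_subset (Finset.range_subset_range.2 (le_max_left _ _))

/-- Stability: if column `j` of `conj f` is nonzero then `j + conj f j ≤ |f|`. -/
lemma stab_conj {f : ℕ → ℕ} (hf : IsPartition f) (j : ℕ) (hj : 1 ≤ conj f j) :
    j + conj f j ≤ psize f := by
  set c := conj f j with hc
  have h1 : ∑ i ∈ Finset.range c, f i ≤ psize f := sum_range_le_psize hf c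
  have h2 : ∀ i ∈ Finset.range c, j + 1 ≤ f i := by
    intro i hi
    rw [← conj_cell hf]
    simp only [Finset.mem_range] at hi
    omega
  have h3 : c * (j + 1) ≤ ∑ i ∈ Finset.range c, f i := by
    calc c * (j + 1) = ∑ _i ∈ Finset.range c, (j + 1) := by
          rw [Finset.sum_const, Finset.card_range, smul_eq_mul]
      _ ≤ ∑ i ∈ Finset.range c, f i := Finset.sum_le_sum h2
  have h4 : j + c ≤ c * (j + 1) := by
    have : c * (j + 1) = c * j + c := by ring
    have hcj : j ≤ c * j := Nat.le_mul_of_pos_left j hj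
    omega
  omega

/-- Key stable-union lemma: `(a ∪ δ^m) + b = (b + δ^m) ∪ a` pointwise. -/
lemma key (a b : ℕ → ℕ) (ha : IsPartition a) (hb : IsPartition b)
    (m S T : ℕ) (hST : S + T ≤ m)
    (hSa : ∀ t, 1 ≤ a t → t + a t ≤ S)
    (hTb : ∀ t, 1 ≤ b t → t + b t ≤ T) (i : ℕ) :
    unionF a (delta m) i + b i = unionF (addF b (delta m)) a i := by
  have ha' : IsPartition (conj a) := isPartition_conj ha
  have hbd : IsPartition (addF b (delta m)) := isPartition_add hb (isPartition_delta m)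
  have hbd' : IsPartition (conj (addF b (delta m))) := isPartition_conj hbd
  have hq : IsPartition (addF (conj (addF b (delta m))) (conj a)) := isPartition_add hbd' ha'
  have hp : IsPartition (addF (conj a) (delta m)) := isPartition_add ha' (isPartition_delta m)
  have hu : unionF a (delta m) = conj (addF (conj a) (delta m)) := by
    unfold unionF
    rw [conj_delta]
  have hw : unionF (addF b (delta m)) a = conj (addF (conj (addF b (delta m))) (conj a)) := rfl
  rw [hu, hw]
  set u := conj (addF (conj a) (delta m)) i with hu_def
  set w := conj (addF (conj (addF b (delta m))) (conj a)) i with hw_def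
  have cellU : ∀ v, v + 1 ≤ u ↔ i + 1 ≤ conj a v + delta m v := fun v => conj_cell hp v i
  have cellW : ∀ v, v + 1 ≤ w ↔ i + 1 ≤ conj (addF b (delta m)) v + conj a v :=
    fun v => conj_cell hq v i
  have cellBD : ∀ t v, t + 1 ≤ conj (addF b (delta m)) v ↔ v + 1 ≤ b t + delta m t :=
    fun t v => conj_cell hbd t v
  have cellA : ∀ t v, t + 1 ≤ conj a v ↔ v + 1 ≤ a t := fun t v => conj_cell ha t v
  have a'mono := ha'.1
  have bmono := hb.1
  have hSa' : ∀ v, 1 ≤ conj a v → v + conj a v ≤ S := by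
    intro v hv
    have h1 : (conj a v - 1) + 1 ≤ conj a v := by omega
    rw [cellA] at h1
    have h2 := hSa (conj a v - 1) (by omega)
    omega
  have hzS : ∀ v, S ≤ v → conj a v = 0 := by
    intro v hv
    by_contra h
    have := hSa' v (by omega)
    omega
  -- Basic facts about u:
  have F1 : conj a u + delta m u ≤ i := by
    have h : ¬ (u + 1 ≤ u) := by omega
    rw [cellU u] at h
    omega
  have Dlow : m ≤ i + 1 ∨ m - 1 - i ≤ u := by
    by_cases hmi : m ≤ i + 1
    · left; exact hmi
    · right
      have h : (m - 2 - i) + 1 ≤ u := by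
        rw [cellU]
        have hdv : delta m (m - 2 - i) = i + 1 := by
          simp only [delta]; omega
        omega
      omega
  have Ueq : 1 ≤ b i → u = m - 1 - i := by
    intro hB
    have hiT := hTb i hB
    have hz : conj a (m - 1 - i) = 0 := hzS _ (by omega)
    have hup : ¬ ((m - 1 - i) + 1 ≤ u) := by
      rw [cellU]
      have hdv : delta m (m - 1 - i) = i := by
        simp only [delta]; omega
      omega
    rcases Dlow with h | h
    · omega
    · omega
  -- Upper bound: w ≤ u + b i
  have hUB : w ≤ u + b i := by
    by_contra hcon
    push_neg at hcon
    have h1 : (u + b i) + 1 ≤ w := hcon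
    rw [cellW] at h1
    set V := u + b i with hV
    set A1 := conj a V with hA1
    have hc2 : ∀ t, b t + delta m t ≤ V → conj (addF b (delta m)) V ≤ t := by
      intro t htt
      by_contra hc
      push_neg at hc
      have h2 : t + 1 ≤ conj (addF b (delta m)) V := hc
      rw [cellBD] at h2
      omega
    have hA1u : A1 ≤ conj a u := a'mono (by omega)
    rcases Nat.eq_zero_or_pos A1 with hA10 | hA1pos
    · -- A1 = 0 : witness t = i, since delta m i ≤ u
      have hdi : delta m i = m - 1 - i := rfl
      have hwit : b i + delta m i ≤ V := by
        rcases Dlow with h | h <;> omega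
      have := hc2 i hwit
      omega
    · have hVS : V + A1 ≤ S := hSa' V hA1pos
      rcases Nat.eq_zero_or_pos (b i) with hB0 | hBpos
      · -- b i = 0, V = u, A1 = conj a u ≥ 1
        have hdu : delta m u = m - 1 - u := rfl
        set t := i - A1 with ht
        have hwit : b t + delta m t ≤ V := by
          have hdt : delta m t = m - 1 - t := rfl
          rcases Nat.eq_zero_or_pos (b t) with hbt | hbt
          · omega
          · have h5 := hTb t hbt
            omega
        have := hc2 t hwit
        omega
      · -- b i ≥ 1 : contradiction since then A1 = 0
        have hueq := Ueq hBpos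
        have hiT := hTb i hBpos
        have : conj a V = 0 := hzS V (by omega)
        omega
  -- Lower bound: u + b i ≤ w
  have hLB : u + b i ≤ w := by
    rcases Nat.eq_zero_or_pos (u + b i) with h0 | hpos
    · omega
    · have hgoal : (u + b i - 1) + 1 ≤ w := by
        rw [cellW]
        set V1 := u + b i - 1 with hV1
        set A0 := conj a V1 with hA0def
        by_cases hA0 : i + 1 ≤ A0
        · omega
        · push_neg at hA0
          have hwit : V1 + 1 ≤ b (i - A0) + delta m (i - A0) := by
            rcases Nat.eq_zero_or_pos u with hu0 | hupos
            · -- u = 0, b i ≥ 1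
              have hbm := bmono (show i - A0 ≤ i by omega)
              omega
            · rcases Nat.eq_zero_or_pos (b i) with hB0 | hBpos
              · -- b i = 0, V1 = u - 1
                have F2 : i + 1 ≤ conj a (u - 1) + delta m (u - 1) := by
                  have h : (u - 1) + 1 ≤ u := by omega
                  rw [cellU] at h
                  exact h
                have hdu1 : delta m (u - 1) = m - 1 - (u - 1) := rfl
                have hdt : delta m (i - A0) = m - 1 - (i - A0) := rfl
                have hA0eq : A0 = conj a (u - 1) := by
                  rw [hA0def, hV1]
                  congr 1
                  omega
                omega
              · -- b i ≥ 1
                have hueq := Ueq hBpos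
                have hiT := hTb i hBpos
                have hz : A0 = 0 := by
                  rw [hA0def]
                  exact hzS V1 (by omega)
                have hdi : delta m i = m - 1 - i := rfl
                have hdt2 : delta m (i - A0) = m - 1 - (i - A0) := rfl
                have hbm := bmono (show i - A0 ≤ i by omega)
                omega
          have hc1 : (i - A0) + 1 ≤ conj (addF b (delta m)) V1 := by
            rw [cellBD]
            exact hwit
          omega
      omega
  omega

/-- **Conjugation in the stable sector** (Lemma B.4).
If `λ`, `μ` are partitions and `m ≥ |λ| + |μ|`, then
`((λ + δ^m) ∪ μ)' = (μ' + δ^m) ∪ λ'`. -/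
theorem conjugation_stable (f g : ℕ → ℕ) (hf : IsPartition f) (hg : IsPartition g)
    (m : ℕ) (hm : psize f + psize g ≤ m) :
    conj (unionF (addF f (delta m)) g) = unionF (addF (conj g) (delta m)) (conj f) := by
  have hδ := isPartition_delta m
  have hfδ : IsPartition (addF f (delta m)) := isPartition_add hf hδ
  have h1 : unionF (addF f (delta m)) g = conj (addF (conj (addF f (delta m))) (conj g)) := rfl
  have h2 : IsPartition (addF (conj (addF f (delta m))) (conj g)) :=
    isPartition_add (isPartition_conj hfδ) (isPartition_conj hg)
  have h3 : conj (unionF (addF f (delta m)) g) = addF (conj (addF f (delta m))) (conj g) := by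
    rw [h1, conj_conj h2]
  have h4 : conj (addF f (delta m)) = unionF (conj f) (delta m) := by
    unfold unionF
    rw [conj_conj hf, conj_delta]
  rw [h3, h4]
  funext i
  exact key (conj f) (conj g) (isPartition_conj hf) (isPartition_conj hg) m (psize f) (psize g)
    hm (fun t ht => stab_conj hf t ht) (fun t ht => stab_conj hg t ht) i

end DoubleMacdonald
end
end

section
/- Equivalence of the dominance orders in the stable sector (Proposition B.6). Let λ, μ, ω, η be partitions with |λ| + |μ| = |ω| + |η| = n and let m be an integer with m ≥ n. Set Λ* = (λ + δ^m) ∪ μ, Λ⊛ = (λ + δ^{m+1}) ∪ μ, Ω* = (ω + δ^m) ∪ η, Ω⊛ = (ω + δ^{m+1}) ∪ η. Then the following are equivalent: (i) for every i ≥ 1, λ_1 + ⋯ + λ_i ≥ ω_1 + ⋯ + ω_i, and for every j ≥ 1, |λ| + μ_1 + ⋯ + μ_j ≥ |ω| + η_1 + ⋯ + η_j; (ii) Λ* ≥ Ω* and Λ⊛ ≥ Ω⊛ in the dominance order on partitions. -/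
noncomputable section

namespace DoubleMacdonald

/-! ### Basic lemmas on `psum` -/

lemma psum_mono (f : ℕ → ℕ) {a b : ℕ} (h : a ≤ b) : psum f a ≤ psum f b :=
  Finset.sum_le_sum_of_subset (Finset.range_subset_range.2 h)

lemma psum_succ (f : ℕ → ℕ) (k : ℕ) : psum f (k + 1) = psum f k + f k :=
  Finset.sum_range_succ f k

lemma psum_addF (f g : ℕ → ℕ) (k : ℕ) : psum (addF f g) k = psum f k + psum g k :=
  Finset.sum_add_distrib

lemma psize_eq_psum {f : ℕ → ℕ} {N : ℕ} (hN : ∀ i, N ≤ i → f i = 0) :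
    psize f = psum f N := by
  apply finsum_eq_sum_of_support_subset
  intro x hx
  simp only [Function.mem_support] at hx
  simp only [Finset.coe_range, Set.mem_Iio]
  by_contra h
  exact hx (hN x (le_of_not_gt h))

lemma psum_le_psize {f : ℕ → ℕ} (hf : IsPartition f) (k : ℕ) : psum f k ≤ psize f := by
  obtain ⟨N, hN⟩ := hf.2
  have h2 : ∀ i, max k N ≤ i → f i = 0 := fun i hi => hN i (le_trans (le_max_right _ _) hi)
  rw [psize_eq_psum h2]
  exact psum_mono f (le_max_left _ _)

lemma part_le_psize {f : ℕ → ℕ} (hf : IsPartition f) (t : ℕ) : f t ≤ psize f := by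
  calc f t ≤ psum f (t + 1) := by rw [psum_succ]; omega
  _ ≤ psize f := psum_le_psize hf _

lemma psum_add_window_le (f : ℕ → ℕ) {a c v : ℕ} (hac : a ≤ c)
    (hv : ∀ t, a ≤ t → t < c → v ≤ f t) : psum f a + (c - a) * v ≤ psum f c := by
  have h1 : psum f c = psum f a + ∑ t ∈ Finset.Ico a c, f t := by
    unfold psum
    simp only [Finset.range_eq_Ico]
    exact (Finset.sum_Ico_consecutive f (Nat.zero_le a) hac).symm
  rw [h1]
  have h2 : (c - a) * v ≤ ∑ t ∈ Finset.Ico a c, f t := by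
    calc (c - a) * v = ∑ _t ∈ Finset.Ico a c, v := by
          rw [Finset.sum_const, Nat.card_Ico, smul_eq_mul]
      _ ≤ ∑ t ∈ Finset.Ico a c, f t := by
          apply Finset.sum_le_sum
          intro t ht
          rw [Finset.mem_Ico] at ht
          exact hv t ht.1 ht.2
  omega

lemma psum_window_le_add (f : ℕ → ℕ) {a c v : ℕ} (hac : a ≤ c)
    (hv : ∀ t, a ≤ t → t < c → f t ≤ v) : psum f c ≤ psum f a + (c - a) * v := by
  have h1 : psum f c = psum f a + ∑ t ∈ Finset.Ico a c, f t := by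
    unfold psum
    simp only [Finset.range_eq_Ico]
    exact (Finset.sum_Ico_consecutive f (Nat.zero_le a) hac).symm
  rw [h1]
  have h2 : ∑ t ∈ Finset.Ico a c, f t ≤ (c - a) * v := by
    calc ∑ t ∈ Finset.Ico a c, f t ≤ ∑ _t ∈ Finset.Ico a c, v := by
          apply Finset.sum_le_sum
          intro t ht
          rw [Finset.mem_Ico] at ht
          exact hv t ht.1 ht.2
      _ = (c - a) * v := by rw [Finset.sum_const, Nat.card_Ico, smul_eq_mul]
  omega

/-- Length of a partition: there is `L` such that parts vanish from `L` on,
all parts before `L` are positive, `psum f L = psize f` and `L ≤ psize f`. -/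
lemma exists_llen {f : ℕ → ℕ} (hf : IsPartition f) :
    ∃ L, (∀ i, L ≤ i → f i = 0) ∧ (∀ t, t < L → 1 ≤ f t) ∧
      (∀ a, L ≤ a → psum f a = psize f) ∧ L ≤ psize f := by
  obtain ⟨N, hN⟩ := hf.2
  have hex : ∃ i, f i = 0 := ⟨N, hN N le_rfl⟩
  classical
  refine ⟨Nat.find hex, ?_, ?_, ?_, ?_⟩
  · intro i hi
    have := Nat.find_spec hex
    have h2 := hf.1 hi
    omega
  · intro t ht
    have := Nat.find_min hex ht
    omega
  · intro a ha
    have h0 : ∀ i, a ≤ i → f i = 0 := by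
      intro i hi
      have := Nat.find_spec hex
      have h2 := hf.1 (le_trans ha hi)
      omega
    exact (psize_eq_psum h0).symm
  · have h1 : ∀ i, Nat.find hex ≤ i → f i = 0 := by
      intro i hi
      have := Nat.find_spec hex
      have h2 := hf.1 hi
      omega
    have h2 : psum f 0 + (Nat.find hex - 0) * 1 ≤ psum f (Nat.find hex) := by
      apply psum_add_window_le f (Nat.zero_le _)
      intro t _ ht2
      have := Nat.find_min hex ht2
      omega
    have h3 := psize_eq_psum h1
    have h0 : psum f 0 = 0 := by simp [psum]
    omega


/-! ### Lemmas on `conj` -/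

lemma lowerset_mem_iff {T : Finset ℕ} (hT : ∀ ⦃x y : ℕ⦄, y ∈ T → x ≤ y → x ∈ T) (i : ℕ) :
    i ∈ T ↔ i < T.card := by
  constructor
  · intro hi
    have hsub : Finset.range (i + 1) ⊆ T := by
      intro x hx
      rw [Finset.mem_range] at hx
      exact hT hi (by omega)
    have := Finset.card_le_card hsub
    rw [Finset.card_range] at this
    omega
  · intro hi
    by_contra h
    have hsub : T ⊆ Finset.range i := by
      intro x hx
      rw [Finset.mem_range]
      by_contra h2
      exact h (hT hx (by omega))
    have := Finset.card_le_card hsub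
    rw [Finset.card_range] at this
    omega

lemma conj_eq_card {f : ℕ → ℕ} {N : ℕ} (hN : ∀ i, N ≤ i → f i = 0) (j : ℕ) :
    conj f j = ((Finset.range N).filter (fun i => j + 1 ≤ f i)).card := by
  have hset : {i : ℕ | j + 1 ≤ f i} =
      ↑((Finset.range N).filter (fun i => j + 1 ≤ f i)) := by
    ext x
    simp only [Set.mem_setOf_eq, Finset.coe_filter, Finset.mem_range]
    constructor
    · intro hx
      refine ⟨?_, hx⟩
      by_contra h
      have := hN x (by omega)
      omega
    · exact fun hx => hx.2
  rw [conj, hset, Nat.card_coe_set_eq, Set.ncard_coe_finset]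

lemma lt_conj_iff {f : ℕ → ℕ} (hf : IsPartition f) {i j : ℕ} :
    i < conj f j ↔ j + 1 ≤ f i := by
  obtain ⟨N, hN⟩ := hf.2
  rw [conj_eq_card hN]
  set T := (Finset.range N).filter (fun i => j + 1 ≤ f i) with hT
  have hlow : ∀ ⦃x y : ℕ⦄, y ∈ T → x ≤ y → x ∈ T := by
    intro x y hy hxy
    rw [hT, Finset.mem_filter, Finset.mem_range] at hy ⊢
    have := hf.1 hxy
    exact ⟨by omega, by omega⟩
  rw [← lowerset_mem_iff hlow]
  rw [hT, Finset.mem_filter, Finset.mem_range]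
  constructor
  · exact fun h => h.2
  · intro h
    refine ⟨?_, h⟩
    by_contra h2
    have := hN i (by omega)
    omega

lemma conj_decr {f : ℕ → ℕ} (hf : IsPartition f) ⦃i j : ℕ⦄ (hij : i ≤ j) :
    conj f j ≤ conj f i := by
  by_contra h
  push_neg at h
  have h1 : conj f i < conj f j := h
  have h2 : conj f i < conj f j → (i + 1 ≤ f (conj f i) → False) → False := by
    intro _ _
    have := (lt_conj_iff hf (i := conj f i) (j := j)).1 h1
    have h4 : ¬ (conj f i < conj f i) := lt_irrefl _
    rw [lt_conj_iff hf] at h4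
    omega
  exact h2 h1 (fun h3 => by
    have h4 : ¬ (conj f i < conj f i) := lt_irrefl _
    rw [lt_conj_iff hf] at h4
    omega)

lemma conj_support {f : ℕ → ℕ} (hf : IsPartition f) {j : ℕ} (hj : f 0 ≤ j) :
    conj f j = 0 := by
  by_contra h
  have h1 : 0 < conj f j := Nat.pos_of_ne_zero h
  rw [lt_conj_iff hf] at h1
  omega

lemma psum_conj_eq (H : ℕ → ℕ) {N : ℕ} (hN : ∀ j, N ≤ j → H j = 0) (k : ℕ) :
    psum (conj H) k = ∑ j ∈ Finset.range N, min k (H j) := by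
  unfold psum
  have h1 : ∀ i, conj H i = ∑ j ∈ Finset.range N, (if i + 1 ≤ H j then 1 else 0) := by
    intro i
    rw [conj_eq_card hN i, Finset.card_filter]
  calc ∑ i ∈ Finset.range k, conj H i
      = ∑ i ∈ Finset.range k, ∑ j ∈ Finset.range N, (if i + 1 ≤ H j then 1 else 0) := by
        apply Finset.sum_congr rfl; intro i _; exact h1 i
    _ = ∑ j ∈ Finset.range N, ∑ i ∈ Finset.range k, (if i + 1 ≤ H j then 1 else 0) :=
        Finset.sum_comm
    _ = ∑ j ∈ Finset.range N, min k (H j) := by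
        apply Finset.sum_congr rfl
        intro j _
        have : ∑ i ∈ Finset.range k, (if i + 1 ≤ H j then 1 else 0)
            = ((Finset.range k).filter (fun i => i + 1 ≤ H j)).card := by
          rw [Finset.card_filter]
        rw [this]
        have h2 : (Finset.range k).filter (fun i => i + 1 ≤ H j)
            = Finset.range (min k (H j)) := by
          ext x
          simp only [Finset.mem_filter, Finset.mem_range, lt_min_iff]
          omega
        rw [h2, Finset.card_range]


/-! ### The merge formula for unions -/

lemma psum_as_conj {f : ℕ → ℕ} (hf : IsPartition f) {N : ℕ} (hN : f 0 ≤ N) (a : ℕ) :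
    psum f a = ∑ j ∈ Finset.range N, min a (conj f j) := by
  have hb : ∀ j, N ≤ j → conj f j = 0 := fun j hj => conj_support hf (le_trans hN hj)
  have := psum_conj_eq (conj f) hb a
  rw [conj_conj hf] at this
  exact this

lemma psum_unionF_eq {f g : ℕ → ℕ} (hf : IsPartition f) (hg : IsPartition g)
    {N : ℕ} (hNf : f 0 ≤ N) (hNg : g 0 ≤ N) (k : ℕ) :
    psum (unionF f g) k = ∑ j ∈ Finset.range N, min k (conj f j + conj g j) := by
  have hb : ∀ j, N ≤ j → addF (conj f) (conj g) j = 0 := by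
    intro j hj
    have h1 := conj_support hf (le_trans hNf hj)
    have h2 := conj_support hg (le_trans hNg hj)
    simp [addF, h1, h2]
  exact psum_conj_eq _ hb k

lemma union_ge {f g : ℕ → ℕ} (hf : IsPartition f) (hg : IsPartition g) (a b : ℕ) :
    psum f a + psum g b ≤ psum (unionF f g) (a + b) := by
  set N := max (f 0) (g 0) with hN
  rw [psum_unionF_eq hf hg (le_max_left _ _) (le_max_right _ _),
    psum_as_conj hf (le_max_left _ _) a, psum_as_conj hg (le_max_right _ _) b,
    ← Finset.sum_add_distrib]
  apply Finset.sum_le_sum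
  intro j _
  omega

lemma union_le {f g : ℕ → ℕ} (hf : IsPartition f) (hg : IsPartition g) (k : ℕ) :
    ∃ a b, a + b = k ∧ psum (unionF f g) k ≤ psum f a + psum g b := by
  classical
  have hex : ∃ j, conj f j + conj g j ≤ k := by
    refine ⟨max (f 0) (g 0), ?_⟩
    have h1 : conj f (max (f 0) (g 0)) = 0 := conj_support hf (le_max_left _ _)
    have h2 : conj g (max (f 0) (g 0)) = 0 := conj_support hg (le_max_right _ _)
    omega
  set F := conj f with hF
  set G := conj g with hG
  set j0 := Nat.find hex with hj0
  have hspec : F j0 + G j0 ≤ k := Nat.find_spec hex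
  set prev := if j0 = 0 then k else G (j0 - 1) with hprev
  have hprev1 : G j0 ≤ prev := by
    rw [hprev]; split
    · omega
    · exact conj_decr hg (by omega)
  set a := max (F j0) (k - prev) with ha
  have hak : a ≤ k := max_le (by omega) (by omega)
  have ha2 : F j0 ≤ a := le_max_left _ _
  have haG : a + G j0 ≤ k := by
    have h1 : F j0 ≤ k - G j0 := by omega
    have h2 : k - prev ≤ k - G j0 := by omega
    have h3 : a ≤ k - G j0 := max_le h1 h2
    omega
  have key : ∀ j, min k (F j + G j) ≤ min a (F j) + min (k - a) (G j) := by
    intro j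
    by_cases hj : j0 ≤ j
    · have hFj : F j ≤ F j0 := conj_decr hf hj
      have hGj : G j ≤ G j0 := conj_decr hg hj
      have e1 : min a (F j) = F j := min_eq_right (by omega)
      have e2 : min (k - a) (G j) = G j := min_eq_right (by omega)
      rw [e1, e2]
      exact min_le_right _ _
    · push_neg at hj
      have h0 : j0 ≠ 0 := by omega
      have hkj : ¬ (F j + G j ≤ k) := Nat.find_min hex hj
      have hkj' : ¬ (F (j0 - 1) + G (j0 - 1) ≤ k) := Nat.find_min hex (by omega)
      have hFj : F j0 ≤ F j := conj_decr hf (by omega)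
      have hFj' : F (j0 - 1) ≤ F j := conj_decr hf (by omega)
      have hprev_eq : prev = G (j0 - 1) := by rw [hprev, if_neg h0]
      have hpj : prev ≤ G j := by
        rw [hprev_eq]
        exact conj_decr hg (by omega)
      have haF : a ≤ F j := by
        apply max_le hFj
        omega
      have haG2 : k - G j ≤ a := by
        have h1 : k - G j ≤ k - prev := by omega
        exact le_trans h1 (le_max_right _ _)
      have e1 : min a (F j) = a := min_eq_left haF
      have e2 : min (k - a) (G j) = k - a := min_eq_left (by omega)
      rw [e1, e2]
      omega
  refine ⟨a, k - a, by omega, ?_⟩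
  rw [psum_unionF_eq hf hg (le_max_left (f 0) (g 0)) (le_max_right _ _),
    psum_as_conj hf (le_max_left _ (g 0)) a, psum_as_conj hg (le_max_right (f 0) _) (k - a),
    ← Finset.sum_add_distrib]
  apply Finset.sum_le_sum
  intro j _
  exact key j

/-! ### Staircase lemmas -/

lemma delta_isPartition (M : ℕ) : IsPartition (delta M) :=
  ⟨fun i j h => by simp only [delta]; omega, ⟨M, fun i hi => by simp only [delta]; omega⟩⟩

lemma addF_delta_isPartition {f : ℕ → ℕ} (hf : IsPartition f) (M : ℕ) :
    IsPartition (addF f (delta M)) := by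
  constructor
  · intro i j h
    have h1 := hf.1 h
    simp only [addF, delta]
    omega
  · obtain ⟨N, hN⟩ := hf.2
    refine ⟨max N M, fun i hi => ?_⟩
    have h1 := hN i (le_trans (le_max_left _ _) hi)
    simp only [addF, delta]
    omega


lemma psum_zero (f : ℕ → ℕ) : psum f 0 = 0 := by simp [psum]

/-! ### Forward direction -/

lemma fwd {lam mu om eta : ℕ → ℕ}
    (hlam : IsPartition lam) (hmu : IsPartition mu)
    (hom : IsPartition om) (heta : IsPartition eta)
    {n M : ℕ} (hlm : psize lam + psize mu = n) (hoe : psize om + psize eta = n)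
    (hM : n ≤ M)
    (h1 : ∀ i, 1 ≤ i → psum om i ≤ psum lam i)
    (h2 : ∀ j, 1 ≤ j → psize om + psum eta j ≤ psize lam + psum mu j) :
    Dominates (unionF (addF lam (delta M)) mu) (unionF (addF om (delta M)) eta) := by
  intro k
  obtain ⟨a, b, hab, hle⟩ := union_le (addF_delta_isPartition hom M) heta k
  rw [psum_addF] at hle
  obtain ⟨L, hL0, hLpos, hLsum, hLsize⟩ := exists_llen hlam
  suffices hs : ∃ a' b', a' + b' = k ∧
      psum om a + psum (delta M) a + psum eta b ≤
        psum lam a' + psum (delta M) a' + psum mu b' by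
    obtain ⟨a', b', hab', hle'⟩ := hs
    have h3 := union_ge (addF_delta_isPartition hlam M) hmu a' b'
    rw [psum_addF, hab'] at h3
    omega
  have hOa : psum om a ≤ psize om := psum_le_psize hom a
  have hMb : psum mu b ≤ psize mu := psum_le_psize hmu b
  rcases Nat.eq_zero_or_pos b with hb | hb
  · -- case b = 0
    refine ⟨a, 0, by omega, ?_⟩
    subst hb
    rw [psum_zero, psum_zero]
    rcases Nat.eq_zero_or_pos a with haz | haz
    · subst haz
      have e1 := psum_zero om
      have e2 := psum_zero lam
      omega
    · have := h1 a haz; omega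
  rcases le_or_gt L a with hLa | hLa
  · -- case L ≤ a : matched split works
    refine ⟨a, b, hab, ?_⟩
    have e1 : psum lam a = psize lam := hLsum a hLa
    have e2 := h2 b hb
    omega
  rcases le_or_gt (a + b) L with hcL | hcL
  · -- case a + b ≤ L : pure split (a+b, 0)
    refine ⟨a + b, 0, by omega, ?_⟩
    rw [psum_zero]
    have hc1 : a + b ≤ psum lam (a + b) := by
      have := psum_add_window_le lam (Nat.zero_le (a + b)) (v := 1)
        (fun t _ ht2 => hLpos t (by omega))
      rw [psum_zero] at this
      omega
    have hc2 : psum (delta M) a + (a + b - a) * (M - (a + b)) ≤ psum (delta M) (a + b) := by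
      apply psum_add_window_le (delta M) (by omega)
      intro t ht1 ht2
      simp only [delta]
      omega
    have hprod : M - (a + b) ≤ (a + b - a) * (M - (a + b)) :=
      Nat.le_mul_of_pos_left _ (by omega)
    have hcn : a + b ≤ n := by
      have := le_trans hcL hLsize; omega
    have hchain := h2 b hb
    omega
  · -- case a < L < a + b : split (L, a + b - L)
    refine ⟨L, a + b - L, by omega, ?_⟩
    have e1 : psum lam L = psize lam := hLsum L le_rfl
    have hμw : psum mu b ≤ psum mu (a + b - L) + (b - (a + b - L)) * psize mu := by
      apply psum_window_le_add mu (by omega)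
      intro t _ _
      exact part_le_psize hmu t
    have hPw : psum (delta M) a + (L - a) * psize mu ≤ psum (delta M) L := by
      apply psum_add_window_le (delta M) (by omega)
      intro t ht1 ht2
      simp only [delta]
      have h3 : L + psize mu ≤ M := by omega
      omega
    have hbb : b - (a + b - L) = L - a := by omega
    have hchain := h2 b hb
    rw [hbb] at hμw
    omega


/-! ### Backward direction -/

lemma back2 {lam mu om eta : ℕ → ℕ}
    (hlam : IsPartition lam) (hmu : IsPartition mu)
    (hom : IsPartition om) (heta : IsPartition eta)
    {n M : ℕ} (hlm : psize lam + psize mu = n) (hoe : psize om + psize eta = n)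
    (hM : n + 1 ≤ M)
    (hdom : Dominates (unionF (addF lam (delta M)) mu) (unionF (addF om (delta M)) eta)) :
    ∀ j, psize om + psum eta j ≤ psize lam + psum mu j := by
  intro j
  by_contra hcon
  push_neg at hcon
  set a := M - mu j with ha
  have hmuj : mu j + psum mu j ≤ psize mu := by
    have e1 := psum_succ mu j
    have e2 := psum_le_psize hmu (j + 1)
    omega
  have hmujM : mu j ≤ M := by omega
  -- upper bound for the Λ side at k = a + j
  obtain ⟨a', b', hab', hle⟩ := union_le (addF_delta_isPartition hlam M) hmu (a + j)
  rw [psum_addF] at hle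
  have hup : psum lam a' + psum (delta M) a' + psum mu b' ≤
      psize lam + psum (delta M) a + psum mu j := by
    have hLl : psum lam a' ≤ psize lam := psum_le_psize hlam a'
    rcases le_or_gt a' a with hc | hc
    · -- a' ≤ a, b' = j + (a - a')
      have h1 : psum mu b' ≤ psum mu j + (b' - j) * mu j := by
        apply psum_window_le_add mu (by omega)
        intro t ht1 _
        exact hmu.1 ht1
      have h2 : psum (delta M) a' + (a - a') * (M - a) ≤ psum (delta M) a := by
        apply psum_add_window_le (delta M) hc
        intro t ht1 ht2
        simp only [delta]
        omega
      have hMa : M - a = mu j := by omega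
      have hbj : b' - j = a - a' := by omega
      rw [hMa] at h2
      rw [hbj] at h1
      omega
    · -- a < a'
      have hr : a' - a ≤ j := by omega
      have h1 : psum (delta M) a' ≤ psum (delta M) a + (a' - a) * (mu j - 1) := by
        apply psum_window_le_add (delta M) (by omega)
        intro t ht1 ht2
        simp only [delta]
        omega
      have h2 : psum mu b' + (j - b') * (mu j - 1) ≤ psum mu j := by
        apply psum_add_window_le mu (by omega)
        intro t _ ht2
        have := hmu.1 (show t ≤ j by omega)
        omega
      have hjb : j - b' = a' - a := by omega
      rw [hjb] at h2
      omega
  -- lower bound for the Ω side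
  have hlow : psize lam + psum mu j + 1 ≤ psum om a + psum eta j := by
    obtain ⟨Lo, hLo0, hLopos, hLosum, hLosize⟩ := exists_llen hom
    rcases le_or_gt Lo a with hc | hc
    · have e1 : psum om a = psize om := hLosum a hc
      omega
    · have h1 : a ≤ psum om a := by
        have := psum_add_window_le om (Nat.zero_le a) (v := 1)
          (fun t _ ht2 => hLopos t (by omega))
        rw [psum_zero] at this
        omega
      omega
  have hO := union_ge (addF_delta_isPartition hom M) heta a j
  rw [psum_addF] at hO
  have hd := hdom (a + j)
  omega

lemma back1 {lam mu om eta : ℕ → ℕ}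
    (hlam : IsPartition lam) (hmu : IsPartition mu)
    (hom : IsPartition om) (heta : IsPartition eta)
    {n M : ℕ} (hlm : psize lam + psize mu = n) (hoe : psize om + psize eta = n)
    (hM : n + 1 ≤ M)
    (hdom : Dominates (unionF (addF lam (delta M)) mu) (unionF (addF om (delta M)) eta))
    (hb2 : psize om ≤ psize lam) :
    ∀ i, psum om i ≤ psum lam i := by
  by_contra hcon
  push_neg at hcon
  obtain ⟨i0, hi0⟩ := hcon
  classical
  obtain ⟨Lo, hLo0, hLopos, hLosum, hLosize⟩ := exists_llen hom
  obtain ⟨Ll, hLl0, hLlpos, hLlsum, hLlsize⟩ := exists_llen hlam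
  have hbound : ∀ i, psum lam i < psum om i → i < n := by
    intro i hi
    by_contra hni
    push_neg at hni
    have h1 : psum om i = psize om := hLosum i (by omega)
    have h2 : psum lam i = psize lam := hLlsum i (by omega)
    omega
  set i := Nat.findGreatest (fun i => psum lam i < psum om i) n with hi
  have hiS : psum lam i < psum om i := by
    have := Nat.findGreatest_spec (P := fun t => psum lam t < psum om t)
      (le_of_lt (hbound i0 hi0)) hi0
    rwa [← hi] at this
  have hin : i ≤ n := Nat.findGreatest_le n
  have hnext : psum om (i + 1) ≤ psum lam (i + 1) := by
    by_cases hc : i + 1 ≤ n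
    · have := Nat.findGreatest_is_greatest (P := fun i => psum lam i < psum om i)
        (show Nat.findGreatest _ n < i + 1 by omega) hc
      omega
    · by_contra hcc
      push_neg at hcc
      have := hbound _ hcc
      omega
  have hstep : om i + 1 ≤ lam i := by
    have e1 := psum_succ lam i
    have e2 := psum_succ om i
    omega
  have hparts : i + 1 ≤ psum lam (i + 1) := by
    have h3 := psum_add_window_le lam (Nat.zero_le (i + 1)) (v := 1)
      (fun t _ ht2 => by
        have := hlam.1 (show t ≤ i by omega)
        omega)
    rw [psum_zero] at h3
    omega
  have hlsize : i + 1 ≤ psize lam := le_trans hparts (psum_le_psize hlam _)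
  obtain ⟨a', b', hab', hle⟩ := union_le (addF_delta_isPartition hlam M) hmu i
  rw [psum_addF] at hle
  have h1 : psum mu b' ≤ b' * psize mu := by
    have := psum_window_le_add mu (Nat.zero_le b') (v := psize mu)
      (fun t _ _ => part_le_psize hmu t)
    rw [psum_zero] at this
    simp only [Nat.sub_zero] at this
    omega
  have h2 : psum (delta M) a' + (i - a') * (M - i) ≤ psum (delta M) i := by
    apply psum_add_window_le (delta M) (by omega)
    intro t ht1 ht2
    simp only [delta]
    omega
  have h3 : psize mu ≤ M - i := by omega
  have h4 : b' * psize mu ≤ (i - a') * (M - i) := by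
    have hb : b' = i - a' := by omega
    rw [hb]
    exact Nat.mul_le_mul_left _ h3
  have h5 : psum lam a' ≤ psum lam i := psum_mono lam (by omega)
  have hO := union_ge (addF_delta_isPartition hom M) heta i 0
  rw [psum_addF] at hO
  rw [Nat.add_zero] at hO
  rw [psum_zero] at hO
  have hd := hdom i
  omega

/-- **Equivalence of the dominance orders in the stable sector** (Proposition B.6).
Let `λ, μ, ω, η` be partitions with `|λ| + |μ| = |ω| + |η| = n` and `m ≥ n`.  Set
`Λ* = (λ + δ^m) ∪ μ`, `Λ⊛ = (λ + δ^{m+1}) ∪ μ`, `Ω* = (ω + δ^m) ∪ η`,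
`Ω⊛ = (ω + δ^{m+1}) ∪ η`.  Then the dominance conditions
`λ₁ + ⋯ + λᵢ ≥ ω₁ + ⋯ + ωᵢ` (all `i ≥ 1`) and
`|λ| + μ₁ + ⋯ + μⱼ ≥ |ω| + η₁ + ⋯ + ηⱼ` (all `j ≥ 1`) hold
iff `Λ* ≥ Ω*` and `Λ⊛ ≥ Ω⊛` in the dominance order on partitions. -/
theorem dominance_orders_equiv_stable (lam mu om eta : ℕ → ℕ)
    (hlam : IsPartition lam) (hmu : IsPartition mu)
    (hom : IsPartition om) (heta : IsPartition eta)
    (n m : ℕ)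
    (hlm : psize lam + psize mu = n) (hoe : psize om + psize eta = n)
    (hm : n ≤ m) :
    ((∀ i, 1 ≤ i → psum om i ≤ psum lam i) ∧
        (∀ j, 1 ≤ j → psize om + psum eta j ≤ psize lam + psum mu j)) ↔
      (Dominates (unionF (addF lam (delta m)) mu) (unionF (addF om (delta m)) eta) ∧
        Dominates (unionF (addF lam (delta (m+1))) mu) (unionF (addF om (delta (m+1))) eta)) := by
  constructor
  · rintro ⟨h1, h2⟩
    exact ⟨fwd hlam hmu hom heta hlm hoe hm h1 h2,
      fwd hlam hmu hom heta hlm hoe (by omega) h1 h2⟩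
  · rintro ⟨_, hdom2⟩
    have hM : n + 1 ≤ m + 1 := by omega
    have hb2 := back2 hlam hmu hom heta hlm hoe hM hdom2
    have hb20 := hb2 0
    rw [psum_zero, psum_zero] at hb20
    have hb1 := back1 hlam hmu hom heta hlm hoe hM hdom2 hb20
    exact ⟨fun i _ => hb1 i, fun j _ => hb2 j⟩


end DoubleMacdonald
end
end
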